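/- arXiv:1707.07105 — 11 statements merged into one kernel-verified Lean document; each statement's English description precedes it below -/
import Mathlib

section
/- Let vmin, vmax be real numbers with 0 < vmin ≤ vmax, let v0 be a nonzero complex number with θ = arg(v0), and let φ = arccos(vmin/vmax). Then the convex voltage feasibility domain S_V = {v ∈ ℂ : |v| ≤ vmax and Re(v · conj(v0)) ≥ vmin · |v0|} equals the closed convex hull of the circular arc {vmax · exp(i·ψ) : ψ ∈ [θ − φ, θ + φ]}. -/
open Complex Set

set_option maxHeartbeats 1000000 in
lemma core_arc (vmin vmax : ℝ) (hmin : 0 < vmin) (hle : vmin ≤ vmax)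
    (φ : ℝ) (hφ : φ = Real.arccos (vmin / vmax))
    (z : ℂ) (h1 : ‖z‖ ≤ vmax) (h2 : vmin ≤ z.re) :
    z ∈ convexHull ℝ {w : ℂ | ∃ χ ∈ Set.Icc (-φ) φ,
        w = (vmax : ℂ) * Complex.exp (χ * Complex.I)} := by
  obtain ⟨A, hA⟩ : ∃ A, A = {w : ℂ | ∃ χ ∈ Set.Icc (-φ) φ, w = (vmax : ℂ) * Complex.exp (χ * Complex.I)} := ⟨_, rfl⟩
  rw [← hA]
  have hvmax : 0 < vmax := lt_of_lt_of_le hmin hle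
  have hx0 : 0 < z.re := lt_of_lt_of_le hmin h2
  have hz0 : z ≠ 0 := by
    intro h; rw [h] at hx0; simp at hx0
  obtain ⟨r, hr⟩ : ∃ r : ℝ, ‖z‖ = r := ⟨_, rfl⟩
  rw [hr] at h1
  have hr0 : 0 < r := hr ▸ norm_pos_iff.mpr hz0
  have hxr : z.re ≤ r := hr ▸ Complex.re_le_norm z
  have hr2 : z.re ^ 2 + z.im ^ 2 = r ^ 2 := by
    rw [← hr, Complex.sq_norm, Complex.normSq_apply]; ring
  have hratio1 : vmin / vmax ≤ 1 := by rw [div_le_one hvmax]; exact hle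
  have hcosφ : Real.cos φ = vmin / vmax := by
    rw [hφ, Real.cos_arccos ((by norm_num : (-1:ℝ) ≤ 0).trans (by positivity)) hratio1]
  have hφ0 : 0 ≤ φ := hφ ▸ Real.arccos_nonneg _
  obtain ⟨δ, hδ⟩ : ∃ d : ℝ, Complex.arg z = d := ⟨_, rfl⟩
  have hcosδ : Real.cos δ = z.re / r := by rw [← hδ, ← hr]; exact Complex.cos_arg hz0
  have hcos_ge : vmin / vmax ≤ Real.cos δ := by
    rw [hcosδ, div_le_div_iff₀ hvmax hr0]; nlinarith
  have hδabs : |δ| ≤ φ := by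
    have h1' : |δ| < Real.pi / 2 := hδ ▸ Complex.abs_arg_lt_pi_div_two_iff.2 (Or.inl hx0)
    have heq : Real.arccos (Real.cos δ) = |δ| := by
      rw [← Real.cos_abs]
      exact Real.arccos_cos (abs_nonneg _) (by linarith [Real.pi_pos])
    rw [← heq, hφ]
    exact sub_le_sub_left (Real.monotone_arcsin hcos_ge) _
  have hδmem : δ ∈ Set.Icc (-φ) φ := abs_le.1 hδabs
  have hPexp : (r : ℂ) * Complex.exp (δ * Complex.I) = z := by
    rw [← hr, ← hδ]; exact Complex.norm_mul_exp_arg_mul_I z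
  obtain ⟨P, hP⟩ : ∃ P : ℂ, P = (vmax : ℂ) * Complex.exp (δ * Complex.I) := ⟨_, rfl⟩
  have hPA : P ∈ A := by rw [hA]; exact ⟨δ, hδmem, hP⟩
  have hrne : (r : ℂ) ≠ 0 := by exact_mod_cast hr0.ne'
  have hPz : P = (vmax / r : ℝ) • z := by
    rw [hP, ← hPexp, Complex.real_smul]
    push_cast
    field_simp
  have hPre : P.re = vmax / r * z.re := by rw [hPz, Complex.real_smul, Complex.re_ofReal_mul]
  have hPim : P.im = vmax / r * z.im := by rw [hPz, Complex.real_smul, Complex.im_ofReal_mul]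
  by_cases hcase : r = vmax
  · have : z = P := by rw [hP, ← hcase, hPexp]
    exact this ▸ subset_convexHull ℝ A hPA
  · have hrlt : r < vmax := lt_of_le_of_ne h1 hcase
    have hvlt : vmin < vmax := by linarith
    obtain ⟨q, hq⟩ : ∃ q : ℝ, Real.sqrt (vmax ^ 2 - vmin ^ 2) = q := ⟨_, rfl⟩
    have hq0 : 0 < q := hq ▸ Real.sqrt_pos.2 (by nlinarith)
    have hq2 : q ^ 2 = vmax ^ 2 - vmin ^ 2 := hq ▸ Real.sq_sqrt (by nlinarith)
    have hsinφ' : Real.sin φ = q / vmax := by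
      rw [hφ, Real.sin_arccos,
        show (1 : ℝ) - (vmin / vmax) ^ 2 = (vmax ^ 2 - vmin ^ 2) / vmax ^ 2 by field_simp,
        Real.sqrt_div (by nlinarith), Real.sqrt_sq hvmax.le, hq]
    obtain ⟨Qp, hQp⟩ : ∃ Q : ℂ, Q = (vmax : ℂ) * Complex.exp ((φ : ℂ) * Complex.I) := ⟨_, rfl⟩
    obtain ⟨Qm, hQm⟩ : ∃ Q : ℂ, Q = (vmax : ℂ) * Complex.exp (((-φ : ℝ) : ℂ) * Complex.I) := ⟨_, rfl⟩
    have hQpA : Qp ∈ A := by rw [hA]; exact ⟨φ, ⟨by linarith, le_refl _⟩, hQp⟩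
    have hQmA : Qm ∈ A := by rw [hA]; exact ⟨-φ, ⟨le_refl _, by linarith⟩, by rw [hQm]⟩
    have hQpc : Qp = (vmin : ℂ) + (q : ℂ) * Complex.I := by
      rw [hQp, Complex.exp_mul_I]
      apply Complex.ext <;>
        simp [Complex.cos_ofReal_re, Complex.sin_ofReal_re, hcosφ, hsinφ'] <;>
        field_simp
    have hQmc : Qm = (vmin : ℂ) - (q : ℂ) * Complex.I := by
      rw [hQm, Complex.exp_mul_I]
      apply Complex.ext <;>
        simp [Complex.cos_ofReal_re, Complex.sin_ofReal_re, hcosφ, hsinφ'] <;>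
        field_simp
    obtain ⟨b, hb⟩ : ∃ b : ℝ, vmin * z.im / z.re = b := ⟨_, rfl⟩
    obtain ⟨p, hp⟩ : ∃ p : ℂ, p = (vmin : ℂ) + (b : ℂ) * Complex.I := ⟨_, rfl⟩
    have hxne : z.re ≠ 0 := hx0.ne'
    have hylim : vmin * |z.im| ≤ z.re * q := by
      have hrv : r ^ 2 ≤ vmax ^ 2 := pow_le_pow_left₀ hr0.le h1 2
      have hxv : vmin ^ 2 ≤ z.re ^ 2 := pow_le_pow_left₀ hmin.le h2 2
      have hy2 : (vmin * |z.im|) ^ 2 ≤ (z.re * q) ^ 2 := by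
        rw [mul_pow, mul_pow, _root_.sq_abs, hq2]
        nlinarith [sq_nonneg z.im, mul_le_mul_of_nonneg_left hrv (sq_nonneg vmin),
          mul_le_mul_of_nonneg_left hxv (sq_nonneg vmax)]
      have h3 := Real.sqrt_le_sqrt hy2
      rwa [Real.sqrt_sq (by positivity), Real.sqrt_sq (by positivity)] at h3
    have hblim : |b| ≤ q := by
      rw [← hb, abs_div, abs_mul, abs_of_pos hmin, abs_of_pos hx0, div_le_iff₀ hx0]
      linarith [hylim]
    have hbq := abs_le.1 hblim
    have hpseg : p ∈ segment ℝ Qm Qp := by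
      refine ⟨(q - b) / (2 * q), (q + b) / (2 * q), div_nonneg (by linarith [hbq.2]) (by positivity),
        div_nonneg (by linarith [hbq.1]) (by positivity), ?_, ?_⟩
      · field_simp
        ring
      · rw [hQmc, hQpc, hp, Complex.real_smul, Complex.real_smul, Complex.ext_iff]
        constructor
        all_goals
          simp only [Complex.re_ofReal_mul, Complex.im_ofReal_mul, Complex.add_re, Complex.add_im,
            Complex.sub_re, Complex.sub_im, Complex.mul_re, Complex.mul_im, Complex.I_re,
            Complex.I_im, Complex.ofReal_re, Complex.ofReal_im, mul_zero, mul_one, zero_mul,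
            sub_zero, zero_sub, add_zero, zero_add]
        all_goals field_simp [hq0.ne']
        all_goals ring
    have hDpos : 0 < vmax * z.re - vmin * r := by
      have h5 : r * vmin ≤ r * z.re := mul_le_mul_of_nonneg_left h2 hr0.le
      have h6 : r * z.re < vmax * z.re := mul_lt_mul_of_pos_right hrlt hx0
      linarith
    have hDne : vmax * z.re - vmin * r ≠ 0 := hDpos.ne'
    have hzseg : z ∈ segment ℝ p P := by
      refine ⟨z.re * (vmax - r) / (vmax * z.re - vmin * r),
        r * (z.re - vmin) / (vmax * z.re - vmin * r), ?_, ?_, ?_, ?_⟩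
      · have h7 : 0 ≤ z.re * (vmax - r) := mul_nonneg hx0.le (by linarith)
        positivity
      · have h8 : 0 ≤ r * (z.re - vmin) := mul_nonneg hr0.le (by linarith)
        positivity
      · field_simp
        rw [div_eq_one_iff_eq (by intro h; apply hDne; linarith)]; ring
      · have hpz : p = (vmin / z.re : ℝ) • z := by
          rw [hp, ← hb, Complex.real_smul, Complex.ext_iff]
          constructor
          all_goals
            simp only [Complex.re_ofReal_mul, Complex.im_ofReal_mul, Complex.add_re,
              Complex.add_im, Complex.mul_re, Complex.mul_im, Complex.I_re, Complex.I_im,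
              Complex.ofReal_re, Complex.ofReal_im, mul_zero, mul_one, zero_mul, sub_zero,
              zero_sub, add_zero, zero_add]
          · field_simp
          · field_simp
        rw [hpz, hPz, smul_smul, smul_smul, ← add_smul]
        have hcoef : z.re * (vmax - r) / (vmax * z.re - vmin * r) * (vmin / z.re)
            + r * (z.re - vmin) / (vmax * z.re - vmin * r) * (vmax / r) = 1 := by
          field_simp
          rw [div_eq_one_iff_eq (by intro h; apply hDne; linarith)]; ring
        rw [hcoef, one_smul]
    have hconv := convex_convexHull ℝ A
    have hpmem : p ∈ convexHull ℝ A :=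
      hconv.segment_subset (subset_convexHull ℝ A hQmA) (subset_convexHull ℝ A hQpA) hpseg
    exact hconv.segment_subset hpmem (subset_convexHull ℝ A hPA) hzseg

/-- The convex voltage feasibility domain equals the closed convex hull
of the circular arc of radius `vmax` with angles in `[θ - φ, θ + φ]`. -/
theorem voltage_domain_eq_closedConvexHull_arc
    (vmin vmax : ℝ) (hmin : 0 < vmin) (hle : vmin ≤ vmax)
    (v0 : ℂ) (hv0 : v0 ≠ 0)
    (θ φ : ℝ) (hθ : θ = Complex.arg v0) (hφ : φ = Real.arccos (vmin / vmax)) :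
    {v : ℂ | ‖v‖ ≤ vmax ∧ vmin * ‖v0‖ ≤ (v * (starRingEnd ℂ) v0).re}
      = closure (convexHull ℝ
          {v : ℂ | ∃ ψ ∈ Set.Icc (θ - φ) (θ + φ),
            v = (vmax : ℂ) * Complex.exp (ψ * Complex.I)}) := by
  have hvmax : 0 < vmax := lt_of_lt_of_le hmin hle
  have hv0abs : 0 < ‖v0‖ := norm_pos_iff.mpr hv0
  have hφ0 : 0 ≤ φ := hφ ▸ Real.arccos_nonneg _
  have hφpi : φ ≤ Real.pi := hφ ▸ Real.arccos_le_pi _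
  have hratio1 : vmin / vmax ≤ 1 := by rw [div_le_one hvmax]; exact hle
  have hcosφ : Real.cos φ = vmin / vmax := by
    rw [hφ, Real.cos_arccos ((by norm_num : (-1:ℝ) ≤ 0).trans (by positivity)) hratio1]
  have hv0eq : v0 = (‖v0‖ : ℂ) * Complex.exp (θ * Complex.I) := by
    rw [hθ]; exact (Complex.norm_mul_exp_arg_mul_I v0).symm
  have hconj : (starRingEnd ℂ) v0 = (‖v0‖ : ℂ) * Complex.exp ((-θ : ℝ) * Complex.I) := by
    conv_lhs => rw [hv0eq]
    rw [map_mul, Complex.conj_ofReal, ← Complex.exp_conj, map_mul, Complex.conj_ofReal,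
      Complex.conj_I]
    congr 2
    push_cast
    ring
  apply Set.Subset.antisymm
  · -- hard inclusion
    rintro v ⟨hv1, hv2⟩
    apply subset_closure
    set z := Complex.exp (((-θ : ℝ) : ℂ) * Complex.I) * v with hz
    have hz1 : ‖z‖ ≤ vmax := by
      rw [hz, norm_mul, Complex.norm_exp_ofReal_mul_I, one_mul]; exact hv1
    have hz2 : vmin ≤ z.re := by
      have hre : (v * (starRingEnd ℂ) v0).re = ‖v0‖ * z.re := by
        rw [hconj, hz, show v * ((‖v0‖ : ℂ) * Complex.exp ((-θ : ℝ) * Complex.I))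
            = (‖v0‖ : ℂ) * (Complex.exp (((-θ : ℝ) : ℂ) * Complex.I) * v) by ring,
          Complex.re_ofReal_mul]
      rw [hre] at hv2
      have := (mul_le_mul_iff_right₀ hv0abs).1 (by linarith : ‖v0‖ * vmin ≤ ‖v0‖ * z.re)
      linarith
    have hcore := core_arc vmin vmax hmin hle φ hφ z hz1 hz2
    have hlin : IsLinearMap ℝ (fun w : ℂ => Complex.exp ((θ : ℂ) * Complex.I) * w) :=
      ⟨fun x y => mul_add _ x y, fun c x => by
        simp only [Complex.real_smul]; ring⟩
    have hvz : Complex.exp ((θ : ℂ) * Complex.I) * z = v := by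
      rw [hz, ← mul_assoc, ← Complex.exp_add,
        show (θ : ℂ) * Complex.I + ((-θ : ℝ) : ℂ) * Complex.I = 0 by push_cast; ring,
        Complex.exp_zero, one_mul]
    have hmem : v ∈ (fun w : ℂ => Complex.exp ((θ : ℂ) * Complex.I) * w) ''
        (convexHull ℝ {w : ℂ | ∃ χ ∈ Set.Icc (-φ) φ, w = (vmax : ℂ) * Complex.exp (χ * Complex.I)}) :=
      ⟨z, hcore, hvz⟩
    rw [hlin.image_convexHull] at hmem
    refine convexHull_mono ?_ hmem
    rintro _ ⟨_, ⟨χ, hχ, rfl⟩, rfl⟩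
    refine ⟨θ + χ, ⟨by linarith [hχ.1], by linarith [hχ.2]⟩, ?_⟩
    rw [show ((θ + χ : ℝ) : ℂ) * Complex.I = (θ : ℂ) * Complex.I + (χ : ℂ) * Complex.I by
      push_cast; ring, Complex.exp_add]
    ring
  · -- easy inclusion
    apply closure_minimal (convexHull_min ?_ ?_) ?_
    · -- arc ⊆ S
      rintro _ ⟨ψ, hψ, rfl⟩
      constructor
      · rw [norm_mul, Complex.norm_real, Real.norm_eq_abs, abs_of_pos hvmax, Complex.norm_exp_ofReal_mul_I, mul_one]
      · have hexp : (vmax : ℂ) * Complex.exp ((ψ : ℂ) * Complex.I) * (starRingEnd ℂ) v0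
            = ((vmax * ‖v0‖ : ℝ) : ℂ) * Complex.exp (((ψ - θ : ℝ) : ℂ) * Complex.I) := by
          have h1 : Complex.exp ((ψ : ℂ) * Complex.I) * Complex.exp (((-θ : ℝ) : ℂ) * Complex.I)
              = Complex.exp (((ψ - θ : ℝ) : ℂ) * Complex.I) := by
            rw [← Complex.exp_add]; congr 1; push_cast; ring
          rw [hconj, show (vmax : ℂ) * Complex.exp ((ψ : ℂ) * Complex.I)
              * ((‖v0‖ : ℂ) * Complex.exp (((-θ : ℝ) : ℂ) * Complex.I))
              = ((vmax * ‖v0‖ : ℝ) : ℂ)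
                * (Complex.exp ((ψ : ℂ) * Complex.I) * Complex.exp (((-θ : ℝ) : ℂ) * Complex.I)) by
            push_cast; ring, h1]
        rw [hexp, Complex.re_ofReal_mul]
        have hcos : Real.cos φ ≤ Real.cos (ψ - θ) := by
          rw [← Real.cos_abs (ψ - θ)]
          exact Real.cos_le_cos_of_nonneg_of_le_pi (abs_nonneg _) hφpi
            (abs_le.2 ⟨by linarith [hψ.1], by linarith [hψ.2]⟩)
        rw [Complex.exp_ofReal_mul_I_re]
        rw [hcosφ] at hcos
        have h10 : vmin ≤ Real.cos (ψ - θ) * vmax := (div_le_iff₀ hvmax).1 hcos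
        calc vmin * ‖v0‖ ≤ Real.cos (ψ - θ) * vmax * ‖v0‖ :=
              mul_le_mul_of_nonneg_right h10 hv0abs.le
          _ = vmax * ‖v0‖ * Real.cos (ψ - θ) := by ring
    · -- convexity
      have hlin' : IsLinearMap ℝ (fun v : ℂ => (v * (starRingEnd ℂ) v0).re) :=
        ⟨fun x y => by simp [add_mul], fun c x => by
          simp only [Complex.real_smul, mul_assoc, Complex.re_ofReal_mul, smul_eq_mul]⟩
      have : {v : ℂ | ‖v‖ ≤ vmax ∧ vmin * ‖v0‖ ≤ (v * (starRingEnd ℂ) v0).re}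
          = Metric.closedBall (0 : ℂ) vmax ∩ {v : ℂ | vmin * ‖v0‖ ≤ (v * (starRingEnd ℂ) v0).re} := by
        ext w
        simp [Metric.mem_closedBall, Complex.dist_eq]
      rw [this]
      exact (convex_closedBall _ _).inter (convex_halfSpace_ge hlin' _)
    · -- closedness
      have : {v : ℂ | ‖v‖ ≤ vmax ∧ vmin * ‖v0‖ ≤ (v * (starRingEnd ℂ) v0).re}
          = {v : ℂ | ‖v‖ ≤ vmax} ∩ {v : ℂ | vmin * ‖v0‖ ≤ (v * (starRingEnd ℂ) v0).re} :=
        rfl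
      rw [this]
      exact (isClosed_le continuous_norm continuous_const).inter
        (isClosed_le continuous_const (Complex.continuous_re.comp (continuous_id.mul continuous_const)))
end

section
/- Let vmin, vmax be real numbers with 0 < vmin ≤ vmax, let v0 be a nonzero complex number with θ = arg(v0), and let φ = arccos(vmin/vmax). Let i be a nonzero complex number whose angle relative to v0 satisfies |arg(i · conj(v0))| ≤ φ. Then the point v* = vmax · i/|i| belongs to S_V = {v ∈ ℂ : |v| ≤ vmax and Re(v · conj(v0)) ≥ vmin · |v0|}, and for every v ∈ S_V one has Re(v · conj(i)) ≤ vmax · |i| = Re(v* · conj(i)). (Worst-case voltage for the active-power upper bound when the current is angularly aligned with the feasible voltage cone.) -/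
/-- Worst-case voltage for the active-power upper bound when the current
is angularly aligned with the feasible voltage cone: `v* = vmax · i / |i|` belongs to
`S_V` and maximizes the active power `Re(v · conj i)` over `S_V`, with value `vmax · |i|`. -/
theorem worst_case_voltage_aligned_current
    (vmin vmax : ℝ) (hmin : 0 < vmin) (hle : vmin ≤ vmax)
    (v0 : ℂ) (hv0 : v0 ≠ 0)
    (θ φ : ℝ) (hθ : θ = Complex.arg v0) (hφ : φ = Real.arccos (vmin / vmax))
    (i : ℂ) (hi : i ≠ 0)
    (hangle : |Complex.arg (i * (starRingEnd ℂ) v0)| ≤ φ) :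
    ((vmax : ℂ) * (i / (‖i‖ : ℂ)) ∈
        {v : ℂ | ‖v‖ ≤ vmax ∧
          vmin * ‖v0‖ ≤ (v * (starRingEnd ℂ) v0).re})
    ∧ (∀ v ∈ {v : ℂ | ‖v‖ ≤ vmax ∧
          vmin * ‖v0‖ ≤ (v * (starRingEnd ℂ) v0).re},
        (v * (starRingEnd ℂ) i).re ≤ vmax * ‖i‖)
    ∧ vmax * ‖i‖
        = (((vmax : ℂ) * (i / (‖i‖ : ℂ))) * (starRingEnd ℂ) i).re := by
  have hvmax : (0:ℝ) < vmax := lt_of_lt_of_le hmin hle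
  have habsi : (0:ℝ) < ‖i‖ := norm_pos_iff.mpr hi
  have habsiC : (‖i‖ : ℂ) ≠ 0 := by
    exact_mod_cast ne_of_gt habsi
  have hz : i * (starRingEnd ℂ) v0 ≠ 0 :=
    mul_ne_zero hi (by simpa using hv0)
  set z := i * (starRingEnd ℂ) v0 with hzdef
  -- cos bound
  have hratio0 : (0:ℝ) < vmin / vmax := div_pos hmin hvmax
  have hratio1 : vmin / vmax ≤ 1 := (div_le_one hvmax).mpr hle
  have hcosφ : Real.cos φ = vmin / vmax := by
    rw [hφ, Real.cos_arccos (by linarith) hratio1]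
  have hφpi : φ ≤ Real.pi := by rw [hφ]; exact Real.arccos_le_pi _
  have hcos : vmin / vmax ≤ Real.cos (Complex.arg z) := by
    rw [← Real.cos_abs, ← hcosφ]
    exact Real.cos_le_cos_of_nonneg_of_le_pi (abs_nonneg _) hφpi hangle
  have hzre : (vmin / vmax) * (‖i‖ * ‖v0‖) ≤ z.re := by
    have h1 : Real.cos (Complex.arg z) = z.re / ‖z‖ := Complex.cos_arg hz
    have habsz : ‖z‖ = ‖i‖ * ‖v0‖ := by
      rw [hzdef, norm_mul, Complex.norm_conj]
    have habszpos : (0:ℝ) < ‖z‖ := norm_pos_iff.mpr hz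
    have := mul_le_mul_of_nonneg_right hcos (le_of_lt habszpos)
    rw [h1, div_mul_cancel₀ _ (ne_of_gt habszpos)] at this
    calc (vmin / vmax) * (‖i‖ * ‖v0‖)
        = (vmin / vmax) * ‖z‖ := by rw [habsz]
      _ ≤ z.re := this
  -- rewrite v* * conj v0
  have hvstar : ((vmax : ℂ) * (i / (‖i‖ : ℂ))) * (starRingEnd ℂ) v0
      = ((vmax / ‖i‖ : ℝ) : ℂ) * z := by
    rw [hzdef]
    push_cast
    field_simp
  have hmem : ‖(vmax : ℂ) * (i / (‖i‖ : ℂ))‖ ≤ vmax ∧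
      vmin * ‖v0‖ ≤ (((vmax : ℂ) * (i / (‖i‖ : ℂ))) * (starRingEnd ℂ) v0).re := by
    constructor
    · rw [norm_mul, norm_div, Complex.norm_real, Complex.norm_real,
        norm_norm, Real.norm_of_nonneg hvmax.le, div_self (ne_of_gt habsi), mul_one]
    · rw [hvstar, Complex.re_ofReal_mul]
      have := mul_le_mul_of_nonneg_left hzre (le_of_lt (div_pos hvmax habsi))
      calc vmin * ‖v0‖
          = (vmax / ‖i‖) * ((vmin / vmax) * (‖i‖ * ‖v0‖)) := by
            field_simp
        _ ≤ (vmax / ‖i‖) * z.re := this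
  refine ⟨hmem, ?_, ?_⟩
  · intro v hv
    calc (v * (starRingEnd ℂ) i).re ≤ ‖v * (starRingEnd ℂ) i‖ := Complex.re_le_norm _
      _ = ‖v‖ * ‖i‖ := by rw [norm_mul, Complex.norm_conj]
      _ ≤ vmax * ‖i‖ :=
        mul_le_mul_of_nonneg_right hv.1 (le_of_lt habsi)
  · have : ((vmax : ℂ) * (i / (‖i‖ : ℂ))) * (starRingEnd ℂ) i
        = ((vmax * ‖i‖ : ℝ) : ℂ) := by
      have hni : i * (starRingEnd ℂ) i = ((‖i‖ ^ 2 : ℝ) : ℂ) := by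
        rw [Complex.mul_conj]
        norm_cast
        exact (Complex.sq_norm i).symm
      field_simp
      rw [mul_assoc, hni]
      push_cast
      ring
    rw [this, Complex.ofReal_re]
end

section
/- Let vmin, vmax be real numbers with 0 < vmin ≤ vmax, let v0 be a nonzero complex number with θ = arg(v0), and let φ = arccos(vmin/vmax). Let i be a nonzero complex number with δ = arg(i · conj(v0)) ∈ [−π, −φ]. Then for every v in S_V = {v ∈ ℂ : |v| ≤ vmax and Re(v · conj(v0)) ≥ vmin · |v0|} one has Re(v · conj(i)) ≤ vmax · |i| · cos(δ + φ), and this bound is attained at the worst-case voltage v = vmax · exp(i·(θ − φ)), which belongs to S_V. -/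
lemma key_ineq (vmin vmax x y cd sd cp sp : ℝ)
    (hmin : 0 < vmin) (hle : vmin ≤ vmax)
    (hcp : cp = vmin / vmax) (hsp : 0 ≤ sp) (hpyth : cp^2 + sp^2 = 1)
    (hsd : sd ≤ 0) (hsum : sd * cp + cd * sp ≤ 0)
    (hx : vmin ≤ x) (hxy : x^2 + y^2 ≤ vmax^2) :
    x * cd + y * sd ≤ vmax * (cd * cp - sd * sp) := by
  have hvmax : 0 < vmax := lt_of_lt_of_le hmin hle
  have hvmincp : vmax * cp = vmin := by rw [hcp]; field_simp
  rcases eq_or_lt_of_le hsp with h0 | h0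
  · have hcp1 : cp = 1 := by
      have : 0 < cp := by rw [hcp]; positivity
      nlinarith
    have hxeq : x = vmax := by nlinarith
    have hy : y = 0 := by nlinarith
    rw [hxeq, hy, hcp1, ← h0]; ring_nf; exact le_rfl
  · have hcs : x * cp - y * sp ≤ vmax := by
      nlinarith [sq_nonneg (x*sp + y*cp), sq_nonneg (x*cp - y*sp - vmax), sq_nonneg (x*cp - y*sp + vmax)]
    have hid : sp * (vmax * (cd*cp - sd*sp)) - sp * (x*cd + y*sd)
        = (-(sd*cp + cd*sp)) * (x - vmin) + (-sd) * (vmax - (x*cp - y*sp)) := by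
      linear_combination (cd*sp + sd*cp) * hvmincp + (-sd*vmax) * hpyth
    have key : sp * (x * cd + y * sd) ≤ sp * (vmax * (cd * cp - sd * sp)) := by
      nlinarith [mul_nonneg (neg_nonneg.mpr hsd) (sub_nonneg.mpr hcs),
        mul_nonneg (neg_nonneg.mpr hsum) (sub_nonneg.mpr hx)]
    exact le_of_mul_le_mul_left key h0

set_option maxHeartbeats 800000 in
/-- If the current's angle relative to `v0` satisfies
`δ = arg(i · conj v0) ∈ [-π, -φ]`, then the active power over the voltage feasibility
domain is bounded by `vmax · |i| · cos(δ + φ)`, attained at `v = vmax · exp(i(θ - φ))`. -/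
theorem worst_case_voltage_lower_sector
    (vmin vmax : ℝ) (hmin : 0 < vmin) (hle : vmin ≤ vmax)
    (v0 : ℂ) (hv0 : v0 ≠ 0)
    (θ φ : ℝ) (hθ : θ = Complex.arg v0) (hφ : φ = Real.arccos (vmin / vmax))
    (i : ℂ) (hi : i ≠ 0)
    (δ : ℝ) (hδ : δ = Complex.arg (i * (starRingEnd ℂ) v0))
    (hδmem : δ ∈ Set.Icc (-Real.pi) (-φ)) :
    (∀ v ∈ {v : ℂ | ‖v‖ ≤ vmax ∧
          vmin * ‖v0‖ ≤ (v * (starRingEnd ℂ) v0).re},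
        (v * (starRingEnd ℂ) i).re ≤ vmax * ‖i‖ * Real.cos (δ + φ))
    ∧ ((vmax : ℂ) * Complex.exp ((θ - φ : ℝ) * Complex.I) ∈
        {v : ℂ | ‖v‖ ≤ vmax ∧
          vmin * ‖v0‖ ≤ (v * (starRingEnd ℂ) v0).re})
    ∧ (((vmax : ℂ) * Complex.exp ((θ - φ : ℝ) * Complex.I)) * (starRingEnd ℂ) i).re
        = vmax * ‖i‖ * Real.cos (δ + φ) := by
  have hvmax : 0 < vmax := lt_of_lt_of_le hmin hle
  have hab0 : 0 < ‖v0‖ := by simpa [norm_pos_iff] using hv0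
  obtain ⟨hδ1, hδ2⟩ := hδmem
  -- basic trig facts about φ
  have hratio1 : vmin / vmax ≤ 1 := (div_le_one hvmax).mpr hle
  have hratio0 : 0 < vmin / vmax := by positivity
  have hcosφ : Real.cos φ = vmin / vmax := by
    rw [hφ]; exact Real.cos_arccos (by linarith) hratio1
  have hφ0 : 0 ≤ φ := by rw [hφ]; exact Real.arccos_nonneg _
  have hφπ : φ ≤ Real.pi := by rw [hφ]; exact Real.arccos_le_pi _
  have hsinφ : 0 ≤ Real.sin φ := Real.sin_nonneg_of_nonneg_of_le_pi hφ0 hφπ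
  have hpyth : (Real.cos φ)^2 + (Real.sin φ)^2 = 1 := Real.cos_sq_add_sin_sq φ
  -- sin δ ≤ 0
  have hδ0 : δ ≤ 0 := by linarith
  have hsinδ : Real.sin δ ≤ 0 := by
    have : 0 ≤ Real.sin (-δ) := Real.sin_nonneg_of_nonneg_of_le_pi (by linarith) (by linarith)
    rw [Real.sin_neg] at this; linarith
  have hsum : Real.sin δ * Real.cos φ + Real.cos δ * Real.sin φ ≤ 0 := by
    rw [← Real.sin_add]
    have : 0 ≤ Real.sin (-(δ + φ)) :=
      Real.sin_nonneg_of_nonneg_of_le_pi (by linarith) (by linarith)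
    rw [Real.sin_neg] at this; linarith
  -- coordinates of v0
  have hv0re : v0.re = ‖v0‖ * Real.cos θ := by
    rw [hθ, Complex.norm_mul_cos_arg]
  have hv0im : v0.im = ‖v0‖ * Real.sin θ := by
    rw [hθ, Complex.norm_mul_sin_arg]
  -- coordinates of i relative to θ, δ
  have habmul : ‖i * (starRingEnd ℂ) v0‖ = ‖i‖ * ‖v0‖ := by
    rw [norm_mul, Complex.norm_conj]
  have hAre : (i * (starRingEnd ℂ) v0).re = ‖i‖ * ‖v0‖ * Real.cos δ := by
    rw [hδ, ← habmul, Complex.norm_mul_cos_arg]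
  have hAim : (i * (starRingEnd ℂ) v0).im = ‖i‖ * ‖v0‖ * Real.sin δ := by
    rw [hδ, ← habmul, Complex.norm_mul_sin_arg]
  have hre' : (i.re * v0.re + i.im * v0.im) = ‖i‖ * ‖v0‖ * Real.cos δ := by
    rw [← hAre]; simp only [Complex.mul_re, Complex.conj_re, Complex.conj_im]; ring
  have him' : (i.im * v0.re - i.re * v0.im) = ‖i‖ * ‖v0‖ * Real.sin δ := by
    rw [← hAim]; simp only [Complex.mul_im, Complex.conj_re, Complex.conj_im]; ring
  rw [hv0re, hv0im] at hre' him'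
  have hire : i.re * Real.cos θ + i.im * Real.sin θ = ‖i‖ * Real.cos δ :=
    mul_left_cancel₀ (ne_of_gt hab0) (by linear_combination hre')
  have hiim : i.im * Real.cos θ - i.re * Real.sin θ = ‖i‖ * Real.sin δ :=
    mul_left_cancel₀ (ne_of_gt hab0) (by linear_combination him')
  have hpythθ : Real.sin θ ^ 2 + Real.cos θ ^ 2 = 1 := Real.sin_sq_add_cos_sq θ
  have hire2 : i.re = ‖i‖ * (Real.cos θ * Real.cos δ - Real.sin θ * Real.sin δ) := by
    linear_combination Real.cos θ * hire - Real.sin θ * hiim - i.re * hpythθ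
  have hiim2 : i.im = ‖i‖ * (Real.sin θ * Real.cos δ + Real.cos θ * Real.sin δ) := by
    linear_combination Real.sin θ * hire + Real.cos θ * hiim - i.im * hpythθ
  have hvmincos : vmax * Real.cos φ = vmin := by rw [hcosφ]; field_simp
  refine ⟨?_, ⟨?_, ?_⟩, ?_⟩
  · rintro v ⟨hv1, hv2⟩
    have hX : vmin ≤ v.re * Real.cos θ + v.im * Real.sin θ := by
      simp only [Complex.mul_re, Complex.conj_re, Complex.conj_im] at hv2
      rw [hv0re, hv0im] at hv2
      have h2 : ‖v0‖ * vmin ≤ ‖v0‖ * (v.re * Real.cos θ + v.im * Real.sin θ) := by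
        linarith [hv2]
      exact le_of_mul_le_mul_left h2 hab0
    have hXY : (v.re * Real.cos θ + v.im * Real.sin θ)^2
        + (v.im * Real.cos θ - v.re * Real.sin θ)^2 ≤ vmax^2 := by
      have h1 : ‖v‖ ^ 2 ≤ vmax ^ 2 := pow_le_pow_left₀ (norm_nonneg v) hv1 2
      rw [Complex.sq_norm, Complex.normSq_apply] at h1
      have hident : (v.re * Real.cos θ + v.im * Real.sin θ)^2
          + (v.im * Real.cos θ - v.re * Real.sin θ)^2 = v.re * v.re + v.im * v.im := by
        linear_combination (v.re^2 + v.im^2) * hpythθ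
      linarith [h1, hident]
    have hkey := key_ineq vmin vmax (v.re * Real.cos θ + v.im * Real.sin θ)
      (v.im * Real.cos θ - v.re * Real.sin θ) (Real.cos δ) (Real.sin δ)
      (Real.cos φ) (Real.sin φ) hmin hle hcosφ hsinφ hpyth hsinδ hsum hX hXY
    calc (v * (starRingEnd ℂ) i).re
        = ‖i‖ * ((v.re * Real.cos θ + v.im * Real.sin θ) * Real.cos δ
            + (v.im * Real.cos θ - v.re * Real.sin θ) * Real.sin δ) := by
          simp only [Complex.mul_re, Complex.conj_re, Complex.conj_im]
          rw [hire2, hiim2]; ring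
      _ ≤ ‖i‖ * (vmax * (Real.cos δ * Real.cos φ - Real.sin δ * Real.sin φ)) :=
          mul_le_mul_of_nonneg_left hkey (norm_nonneg i)
      _ = vmax * ‖i‖ * Real.cos (δ + φ) := by rw [Real.cos_add]; ring
  · rw [norm_mul, Complex.norm_real, Complex.norm_exp_ofReal_mul_I, mul_one,
      Real.norm_of_nonneg hvmax.le]
  · simp only [Complex.mul_re, Complex.mul_im, Complex.ofReal_re, Complex.ofReal_im,
      Complex.conj_re, Complex.conj_im, Complex.exp_ofReal_mul_I_re,
      Complex.exp_ofReal_mul_I_im, zero_mul, mul_zero, sub_zero, zero_add, add_zero]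
    rw [hv0re, hv0im, Real.cos_sub, Real.sin_sub]
    have : vmin * ‖v0‖
        = vmax * (Real.cos θ * Real.cos φ + Real.sin θ * Real.sin φ)
            * (‖v0‖ * Real.cos θ)
          - vmax * (Real.sin θ * Real.cos φ - Real.cos θ * Real.sin φ)
            * -(‖v0‖ * Real.sin θ) := by
      linear_combination (-(vmax * ‖v0‖ * Real.cos φ)) * hpythθ
        - ‖v0‖ * hvmincos
    linarith [this.le]
  · simp only [Complex.mul_re, Complex.mul_im, Complex.ofReal_re, Complex.ofReal_im,
      Complex.conj_re, Complex.conj_im, Complex.exp_ofReal_mul_I_re,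
      Complex.exp_ofReal_mul_I_im, zero_mul, mul_zero, sub_zero, zero_add, add_zero]
    rw [hire2, hiim2, Real.cos_sub, Real.sin_sub, Real.cos_add]
    linear_combination vmax * ‖i‖ * (Real.cos δ * Real.cos φ - Real.sin δ * Real.sin φ) * hpythθ
end

section
/- Let vmin, vmax be real numbers with 0 < vmin ≤ vmax, let v0 be a nonzero complex number with θ = arg(v0), and let φ = arccos(vmin/vmax). Let i be a nonzero complex number with δ = arg(i · conj(v0)) ∈ [φ, π]. Then for every v in S_V = {v ∈ ℂ : |v| ≤ vmax and Re(v · conj(v0)) ≥ vmin · |v0|} one has Re(v · conj(i)) ≤ vmax · |i| · cos(δ − φ), and this bound is attained at the worst-case voltage v = vmax · exp(i·(θ + φ)), which belongs to S_V. -/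
lemma key_real (vmin vmax : ℝ) (hmin : 0 < vmin) (hle : vmin ≤ vmax)
    (φ δ x y : ℝ) (hφ : φ = Real.arccos (vmin / vmax))
    (hδl : φ ≤ δ) (hδπ : δ ≤ Real.pi)
    (hx : vmin ≤ x) (hcirc : x ^ 2 + y ^ 2 ≤ vmax ^ 2) :
    x * Real.cos δ + y * Real.sin δ ≤ vmax * Real.cos (δ - φ) := by
  have hvmax : 0 < vmax := hmin.trans_le hle
  have hxmax : x ≤ vmax := by nlinarith
  have hxpos : 0 < x := hmin.trans_le hx
  set β := Real.arccos (x / vmax) with hβ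
  have h1 : x / vmax ≤ 1 := by rw [div_le_one hvmax]; exact hxmax
  have h0 : (0:ℝ) ≤ x / vmax := by positivity
  have hcosβ : Real.cos β = x / vmax := Real.cos_arccos (by linarith) h1
  have hβ0 : 0 ≤ β := Real.arccos_nonneg _
  have hφ0 : 0 ≤ φ := hφ ▸ Real.arccos_nonneg _
  have hβφ : β ≤ φ := by
    rw [hβ, hφ, Real.arccos, Real.arccos]
    have : Real.arcsin (vmin / vmax) ≤ Real.arcsin (x / vmax) :=
      Real.monotone_arcsin (by rw [div_le_div_iff₀ hvmax hvmax]; nlinarith)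
    linarith
  have hsinβ : Real.sin β = Real.sqrt (1 - (x / vmax) ^ 2) := Real.sin_arccos _
  have hsinβ0 : 0 ≤ Real.sin β := hsinβ ▸ Real.sqrt_nonneg _
  have hsq : (vmax * Real.sin β) ^ 2 = vmax ^ 2 - x ^ 2 := by
    rw [hsinβ, mul_pow, Real.sq_sqrt (by nlinarith [sq_nonneg (x/vmax), div_pow x vmax 2] : (0:ℝ) ≤ 1 - (x / vmax) ^ 2)]
    field_simp
  have hy : y ≤ vmax * Real.sin β := by nlinarith [mul_nonneg hvmax.le hsinβ0]
  have hsinδ : 0 ≤ Real.sin δ := Real.sin_nonneg_of_nonneg_of_le_pi (by linarith) hδπ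
  have hxeq : x = vmax * Real.cos β := by rw [hcosβ]; field_simp
  have hcc : Real.cos (δ - β) ≤ Real.cos (δ - φ) := by
    apply Real.cos_le_cos_of_nonneg_of_le_pi (by linarith) (by linarith) (by linarith)
  have : x * Real.cos δ + y * Real.sin δ ≤ vmax * Real.cos (δ - β) := by
    have h2 : y * Real.sin δ ≤ (vmax * Real.sin β) * Real.sin δ :=
      mul_le_mul_of_nonneg_right hy hsinδ
    calc x * Real.cos δ + y * Real.sin δ
        ≤ x * Real.cos δ + (vmax * Real.sin β) * Real.sin δ := by linarith
      _ = vmax * Real.cos (δ - β) := by rw [Real.cos_sub, hxeq]; ring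
  nlinarith

lemma conj_polar (z : ℂ) (t : ℝ) (ht : t = Complex.arg z) :
    (starRingEnd ℂ) z = (‖z‖ : ℂ) * Complex.exp ((-t : ℝ) * Complex.I) := by
  conv_lhs => rw [← Complex.norm_mul_exp_arg_mul_I z]
  rw [map_mul, ← Complex.exp_conj]
  push_cast [ht]
  ring_nf
  simp [Complex.conj_I, mul_comm]

/-- If the current's angle relative to `v0` satisfies
`δ = arg(i · conj v0) ∈ [φ, π]`, then the active power over the voltage feasibility
domain is bounded by `vmax · |i| · cos(δ - φ)`, attained at `v = vmax · exp(i(θ + φ))`. -/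
theorem worst_case_voltage_upper_sector
    (vmin vmax : ℝ) (hmin : 0 < vmin) (hle : vmin ≤ vmax)
    (v0 : ℂ) (hv0 : v0 ≠ 0)
    (θ φ : ℝ) (hθ : θ = Complex.arg v0) (hφ : φ = Real.arccos (vmin / vmax))
    (i : ℂ) (hi : i ≠ 0)
    (δ : ℝ) (hδ : δ = Complex.arg (i * (starRingEnd ℂ) v0))
    (hδmem : δ ∈ Set.Icc φ Real.pi) :
    (∀ v ∈ {v : ℂ | ‖v‖ ≤ vmax ∧
          vmin * ‖v0‖ ≤ (v * (starRingEnd ℂ) v0).re},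
        (v * (starRingEnd ℂ) i).re ≤ vmax * ‖i‖ * Real.cos (δ - φ))
    ∧ ((vmax : ℂ) * Complex.exp ((θ + φ : ℝ) * Complex.I) ∈
        {v : ℂ | ‖v‖ ≤ vmax ∧
          vmin * ‖v0‖ ≤ (v * (starRingEnd ℂ) v0).re})
    ∧ (((vmax : ℂ) * Complex.exp ((θ + φ : ℝ) * Complex.I)) * (starRingEnd ℂ) i).re
        = vmax * ‖i‖ * Real.cos (δ - φ) := by
  obtain ⟨hδl, hδπ⟩ := hδmem
  have hvmax : 0 < vmax := hmin.trans_le hle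
  set a := ‖v0‖ with haDef
  have ha : (0:ℝ) < a := norm_pos_iff.mpr hv0
  have hcv0 : (starRingEnd ℂ) v0 = (a : ℂ) * Complex.exp ((-θ : ℝ) * Complex.I) :=
    conj_polar v0 θ hθ
  -- i in polar form
  have hi2 : i = (‖i‖ : ℂ) * Complex.exp ((θ + δ : ℝ) * Complex.I) := by
    have h1 : i * (starRingEnd ℂ) v0
        = ((‖i‖ * a : ℝ) : ℂ) * Complex.exp ((δ : ℝ) * Complex.I) := by
      conv_lhs => rw [← Complex.norm_mul_exp_arg_mul_I (i * (starRingEnd ℂ) v0)]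
      rw [← hδ]
      push_cast [norm_mul, Complex.norm_conj]
      ring
    rw [hcv0] at h1
    have hne : ((a : ℂ)) * Complex.exp ((-θ : ℝ) * Complex.I) ≠ 0 :=
      mul_ne_zero (by exact_mod_cast ha.ne') (Complex.exp_ne_zero _)
    apply mul_right_cancel₀ hne
    rw [h1, show ((θ + δ : ℝ) : ℂ) * Complex.I
        = (δ:ℝ) * Complex.I + -((-θ:ℝ) * Complex.I) by push_cast; ring,
      Complex.exp_add, Complex.exp_neg]
    push_cast
    field_simp
  have hconjexp : ∀ t : ℝ, (starRingEnd ℂ) (Complex.exp ((t : ℝ) * Complex.I))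
      = Complex.exp ((-t : ℝ) * Complex.I) := by
    intro t
    rw [← Complex.exp_conj, map_mul, Complex.conj_I, Complex.conj_ofReal]
    push_cast
    ring_nf
  have hconji : (starRingEnd ℂ) i
      = (‖i‖ : ℂ) * Complex.exp ((-(θ + δ) : ℝ) * Complex.I) := by
    conv_lhs => rw [hi2]
    rw [map_mul, Complex.conj_ofReal, hconjexp]
  have hcosφ : Real.cos φ = vmin / vmax := by
    have h0 : (0:ℝ) ≤ vmin / vmax := by positivity
    rw [hφ]; exact Real.cos_arccos (by linarith) ((div_le_one hvmax).mpr hle)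
  refine ⟨?_, ⟨?_, ?_⟩, ?_⟩
  · rintro v ⟨hv1, hv2⟩
    set z := v * (starRingEnd ℂ) v0 with hz
    have habsz : ‖z‖ = ‖v‖ * a := by
      rw [hz, norm_mul, Complex.norm_conj]
    have hcirc : z.re ^ 2 + z.im ^ 2 ≤ (vmax * a) ^ 2 := by
      have h1 : z.re ^ 2 + z.im ^ 2 = (‖z‖) ^ 2 := by
        rw [Complex.sq_norm, Complex.normSq_apply]; ring
      rw [h1, habsz]
      nlinarith [norm_nonneg v, mul_le_mul_of_nonneg_right hv1 ha.le,
        mul_nonneg (norm_nonneg v) ha.le]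
    have hkey := key_real (vmin * a) (vmax * a) (by positivity)
      (by nlinarith) φ δ z.re z.im
      (by rw [hφ, mul_div_mul_right _ _ ha.ne']) hδl hδπ hv2 hcirc
    -- relate power to z
    have hmain : (a : ℂ) * (v * (starRingEnd ℂ) i)
        = (‖i‖ : ℂ) * z * Complex.exp ((-δ : ℝ) * Complex.I) := by
      rw [hconji, hz, hcv0]
      rw [show ((-(θ + δ) : ℝ) : ℂ) * Complex.I
          = (-θ:ℝ) * Complex.I + (-δ:ℝ) * Complex.I by push_cast; ring,
        Complex.exp_add]
      ring
    have hre : a * (v * (starRingEnd ℂ) i).re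
        = ‖i‖ * (z.re * Real.cos δ + z.im * Real.sin δ) := by
      calc a * (v * (starRingEnd ℂ) i).re
          = ((a : ℂ) * (v * (starRingEnd ℂ) i)).re := (Complex.re_ofReal_mul _ _).symm
        _ = ((‖i‖ : ℂ) * (z * Complex.exp ((-δ : ℝ) * Complex.I))).re := by
            rw [hmain]; ring_nf
        _ = ‖i‖ * (z * Complex.exp ((-δ : ℝ) * Complex.I)).re :=
            Complex.re_ofReal_mul _ _
        _ = ‖i‖ * (z.re * Real.cos δ + z.im * Real.sin δ) := by
            rw [Complex.mul_re, Complex.exp_ofReal_mul_I_re, Complex.exp_ofReal_mul_I_im,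
              Real.cos_neg, Real.sin_neg]
            ring
    have := mul_le_mul_of_nonneg_left hkey (norm_nonneg i)
    rw [← hre] at this
    nlinarith
  · rw [norm_mul, Complex.norm_real, Complex.norm_exp_ofReal_mul_I, Real.norm_eq_abs, abs_of_pos hvmax]
    simp
  · have h1 : ((vmax : ℂ) * Complex.exp ((θ + φ : ℝ) * Complex.I)) * (starRingEnd ℂ) v0
        = ((vmax * a : ℝ) : ℂ) * Complex.exp ((φ : ℝ) * Complex.I) := by
      rw [hcv0, show ((θ + φ : ℝ) : ℂ) * Complex.I
          = (φ:ℝ) * Complex.I + -((-θ:ℝ) * Complex.I) by push_cast; ring,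
        Complex.exp_add, Complex.exp_neg]
      push_cast
      field_simp
    rw [h1]
    simp only [Complex.mul_re, Complex.ofReal_re, Complex.ofReal_im,
      Complex.exp_ofReal_mul_I_re, Complex.exp_ofReal_mul_I_im]
    rw [hcosφ]
    have h2 : vmax * a * (vmin / vmax) = vmin * a := by field_simp
    nlinarith [h2]
  · have h1 : ((vmax : ℂ) * Complex.exp ((θ + φ : ℝ) * Complex.I)) * (starRingEnd ℂ) i
        = ((vmax * ‖i‖ : ℝ) : ℂ) * Complex.exp ((φ - δ : ℝ) * Complex.I) := by
      rw [hconji, show ((φ - δ : ℝ) : ℂ) * Complex.I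
          = ((θ + φ : ℝ) : ℂ) * Complex.I + ((-(θ + δ) : ℝ) : ℂ) * Complex.I by push_cast; ring,
        Complex.exp_add]
      push_cast
      ring
    rw [h1]
    simp only [Complex.mul_re, Complex.ofReal_re, Complex.ofReal_im,
      Complex.exp_ofReal_mul_I_re, Complex.exp_ofReal_mul_I_im]
    rw [show φ - δ = -(δ - φ) by ring, Real.cos_neg]
    ring
end

section
/- Let vmin, vmax be real numbers with 0 < vmin ≤ vmax, let v0 be a nonzero complex number with θ = arg(v0), and let φ = arccos(vmin/vmax). Let i be a nonzero complex number and set δ = |arg(i · conj(v0))|. Then the supremum of the active power Re(v · conj(i)) over v ∈ S_V = {v ∈ ℂ : |v| ≤ vmax and Re(v · conj(v0)) ≥ vmin · |v0|} equals vmax · |i| · cos(max(δ − φ, 0)), and this value is attained by some v ∈ S_V. -/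
lemma core_ineq (vmin vmax φ δ x y : ℝ) (hmin : 0 < vmin) (hle : vmin ≤ vmax)
    (hφ : φ = Real.arccos (vmin / vmax)) (hδ0 : 0 ≤ δ) (hδπ : δ ≤ Real.pi)
    (hx : vmin ≤ x) (hxy : x ^ 2 + y ^ 2 ≤ vmax ^ 2) :
    x * Real.cos δ + y * Real.sin δ ≤ vmax * Real.cos (max (δ - φ) 0) := by
  have hvmax : 0 < vmax := lt_of_lt_of_le hmin hle
  have hratio1 : vmin / vmax ≤ 1 := (div_le_one hvmax).mpr hle
  have hratio0 : 0 < vmin / vmax := div_pos hmin hvmax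
  have hcosφ : Real.cos φ = vmin / vmax := by
    rw [hφ]; exact Real.cos_arccos (by linarith) hratio1
  have hφ0 : 0 ≤ φ := hφ ▸ Real.arccos_nonneg _
  have hφπ : φ ≤ Real.pi := hφ ▸ Real.arccos_le_pi _
  have hsinφ : 0 ≤ Real.sin φ := Real.sin_nonneg_of_nonneg_of_le_pi hφ0 hφπ
  have hcs : ∀ c s : ℝ, c ^ 2 + s ^ 2 = 1 → x * c + y * s ≤ vmax := by
    intro c s h
    nlinarith [sq_nonneg (x * s - y * c), sq_nonneg (x * c + y * s - vmax)]
  rcases le_or_gt δ φ with hcase | hcase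
  · have hm : max (δ - φ) 0 = 0 := max_eq_right (by linarith)
    rw [hm, Real.cos_zero, mul_one]
    exact hcs _ _ (Real.cos_sq_add_sin_sq δ)
  · have hm : max (δ - φ) 0 = δ - φ := max_eq_left (by linarith)
    rw [hm]
    rcases eq_or_lt_of_le hsinφ with hs0 | hs0
    · have hφlt : φ < Real.pi := by
        rcases lt_or_eq_of_le hφπ with h | h
        · exact h
        · exfalso; rw [h, Real.cos_pi] at hcosφ; linarith
      have hφ' : φ = 0 :=
        (Real.sin_eq_zero_iff_of_lt_of_lt (by linarith [Real.pi_pos]) hφlt).mp hs0.symm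
      have hvv : vmin = vmax := by
        rw [hφ', Real.cos_zero] at hcosφ
        field_simp at hcosφ; linarith
      have hxe : x = vmax := by nlinarith
      have hye : y = 0 := by nlinarith
      rw [hxe, hye, hφ']
      simp
    · have h1 : x * Real.cos φ + y * Real.sin φ ≤ vmax :=
        hcs _ _ (Real.cos_sq_add_sin_sq φ)
      have h2 : 0 ≤ Real.sin (δ - φ) :=
        Real.sin_nonneg_of_nonneg_of_le_pi (by linarith) (by linarith)
      have h3 : 0 ≤ Real.sin δ := Real.sin_nonneg_of_nonneg_of_le_pi hδ0 hδπ
      have key : Real.sin φ * (x * Real.cos δ + y * Real.sin δ)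
          = Real.sin δ * (x * Real.cos φ + y * Real.sin φ) - Real.sin (δ - φ) * x := by
        rw [Real.sin_sub]; ring
      have key2 : Real.cos (δ - φ) * Real.sin φ
          = Real.sin δ - Real.sin (δ - φ) * Real.cos φ := by
        have h := Real.sin_add (δ - φ) φ
        rw [sub_add_cancel] at h
        linarith
      have hvminφ : vmin = vmax * Real.cos φ := by
        rw [hcosφ]; field_simp
      have key3 : Real.sin φ * (vmax * Real.cos (δ - φ))
          = Real.sin δ * vmax - Real.sin (δ - φ) * vmin := by
        rw [hvminφ]; linear_combination vmax * key2
      have t1 : Real.sin δ * (x * Real.cos φ + y * Real.sin φ) ≤ Real.sin δ * vmax :=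
        mul_le_mul_of_nonneg_left h1 h3
      have t2 : Real.sin (δ - φ) * vmin ≤ Real.sin (δ - φ) * x :=
        mul_le_mul_of_nonneg_left hx h2
      have hstep : Real.sin φ * (x * Real.cos δ + y * Real.sin δ)
          ≤ Real.sin φ * (vmax * Real.cos (δ - φ)) := by
        rw [key, key3]; linarith
      exact le_of_mul_le_mul_left hstep hs0

/-- The supremum of the active power `Re(v · conj i)` over the convex
voltage feasibility domain equals `vmax · |i| · cos(max(δ - φ, 0))` where
`δ = |arg(i · conj v0)|`, and it is attained. -/
theorem sup_active_power_over_voltage_domain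
    (vmin vmax : ℝ) (hmin : 0 < vmin) (hle : vmin ≤ vmax)
    (v0 : ℂ) (hv0 : v0 ≠ 0)
    (θ φ : ℝ) (hθ : θ = Complex.arg v0) (hφ : φ = Real.arccos (vmin / vmax))
    (i : ℂ) (hi : i ≠ 0)
    (δ : ℝ) (hδ : δ = |Complex.arg (i * (starRingEnd ℂ) v0)|) :
    IsGreatest
      {p : ℝ | ∃ v ∈ {v : ℂ | ‖v‖ ≤ vmax ∧
          vmin * ‖v0‖ ≤ (v * (starRingEnd ℂ) v0).re},
        p = (v * (starRingEnd ℂ) i).re}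
      (vmax * ‖i‖ * Real.cos (max (δ - φ) 0)) := by
  have hvmax : 0 < vmax := lt_of_lt_of_le hmin hle
  have hv0a : 0 < ‖v0‖ := norm_pos_iff.mpr hv0
  set k : ℂ := i * (starRingEnd ℂ) v0 with hkdef
  have hk : k ≠ 0 := mul_ne_zero hi (star_ne_zero.mpr hv0)
  set β := Complex.arg k with hβdef
  have hδ0 : 0 ≤ δ := hδ ▸ abs_nonneg _
  have hδπ : δ ≤ Real.pi := by
    rw [hδ]; exact abs_le.mpr ⟨(Complex.neg_pi_lt_arg k).le, Complex.arg_le_pi k⟩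
  have hka : ‖k‖ = ‖i‖ * ‖v0‖ := by
    rw [hkdef, norm_mul, Complex.norm_conj]
  have hkre : k.re = ‖k‖ * Real.cos β := by
    rw [hβdef, Complex.cos_arg hk, mul_div_cancel₀ _ (norm_ne_zero_iff.mpr hk)]
  have hkim : k.im = ‖k‖ * Real.sin β := by
    rw [hβdef, Complex.sin_arg, mul_div_cancel₀ _ (norm_ne_zero_iff.mpr hk)]
  have hpolar : k = ↑(‖k‖) * Complex.exp (↑β * Complex.I) :=
    (Complex.norm_mul_exp_arg_mul_I k).symm
  have hconjk : (starRingEnd ℂ) k = ↑(‖k‖) * Complex.exp (-(↑β * Complex.I)) := by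
    nth_rewrite 1 [hpolar]
    rw [map_mul, Complex.conj_ofReal, ← Complex.exp_conj]
    congr 1
    simp [Complex.conj_I]
  have hconjk2 : (starRingEnd ℂ) k = (starRingEnd ℂ) i * v0 := by
    rw [hkdef, map_mul, Complex.conj_conj]
  have hφ0 : 0 ≤ φ := hφ ▸ Real.arccos_nonneg _
  have hφπ : φ ≤ Real.pi := hφ ▸ Real.arccos_le_pi _
  have hratio1 : vmin / vmax ≤ 1 := (div_le_one hvmax).mpr hle
  have hcosφ : Real.cos φ = vmin / vmax := by
    rw [hφ]; exact Real.cos_arccos (by nlinarith [div_pos hmin hvmax]) hratio1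
  constructor
  · -- membership : the maximum is attained
    set α : ℝ := if 0 ≤ β then min δ φ else -(min δ φ) with hαdef
    have hcosα : Real.cos α = Real.cos (min δ φ) := by
      rw [hαdef]; split <;> simp [Real.cos_neg]
    have hmindel : δ - min δ φ = max (δ - φ) 0 := by
      rcases le_total δ φ with h | h
      · rw [min_eq_left h, max_eq_right (by linarith : δ - φ ≤ 0)]; ring
      · rw [min_eq_right h, max_eq_left (by linarith : (0:ℝ) ≤ δ - φ)]
    have hαβ : Real.cos (α - β) = Real.cos (max (δ - φ) 0) := by
      by_cases hb : 0 ≤ β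
      · have hβδ : β = δ := by rw [hδ]; exact (_root_.abs_of_nonneg hb).symm
        rw [hαdef, if_pos hb, hβδ, show min δ φ - δ = -(max (δ - φ) 0) by
          rw [← hmindel]; ring, Real.cos_neg]
      · have hβδ : β = -δ := by rw [hδ, _root_.abs_of_neg (lt_of_not_ge hb)]; ring
        rw [hαdef, if_neg hb, hβδ, show -(min δ φ) - -δ = max (δ - φ) 0 by
          rw [← hmindel]; ring]
    refine ⟨(vmax : ℂ) * Complex.exp (↑α * Complex.I) * (v0 / ↑(‖v0‖)), ⟨?_, ?_⟩, ?_⟩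
    · rw [norm_mul, norm_mul, norm_div, Complex.norm_exp_ofReal_mul_I, Complex.norm_real,
        Complex.norm_real, Real.norm_eq_abs, Real.norm_eq_abs, abs_of_pos hvmax, abs_of_pos hv0a, div_self hv0a.ne',
        mul_one, mul_one]
    · have h1 : v0 * (starRingEnd ℂ) v0 = (↑((‖v0‖) ^ 2) : ℂ) := by
        rw [Complex.mul_conj, Complex.normSq_eq_norm_sq]
      have hkey : (vmax : ℂ) * Complex.exp (↑α * Complex.I) * (v0 / ↑(‖v0‖)) *
          (starRingEnd ℂ) v0 = ↑(vmax * ‖v0‖) * Complex.exp (↑α * Complex.I) := by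
        calc (vmax : ℂ) * Complex.exp (↑α * Complex.I) * (v0 / ↑(‖v0‖)) *
              (starRingEnd ℂ) v0
            = (vmax : ℂ) * (v0 * (starRingEnd ℂ) v0) * Complex.exp (↑α * Complex.I) /
              ↑(‖v0‖) := by ring
          _ = (vmax : ℂ) * ↑((‖v0‖) ^ 2) * Complex.exp (↑α * Complex.I) /
              ↑(‖v0‖) := by rw [h1]
          _ = ↑(vmax * ‖v0‖) * Complex.exp (↑α * Complex.I) := by
              push_cast
              field_simp [Complex.ofReal_ne_zero.mpr hv0a.ne']
      rw [hkey, Complex.re_ofReal_mul, Complex.exp_ofReal_mul_I_re]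
      have hccos : Real.cos φ ≤ Real.cos α := by
        rw [hcosα]
        exact Real.cos_le_cos_of_nonneg_of_le_pi (le_min hδ0 hφ0) hφπ (min_le_right _ _)
      rw [hcosφ] at hccos
      have h2 := mul_le_mul_of_nonneg_left hccos (le_of_lt (mul_pos hvmax hv0a))
      calc vmin * ‖v0‖ = vmax * ‖v0‖ * (vmin / vmax) := by
            field_simp
        _ ≤ vmax * ‖v0‖ * Real.cos α := h2
    · have hexp : Complex.exp (↑α * Complex.I) * Complex.exp (-(↑β * Complex.I)) =
          Complex.exp (↑(α - β) * Complex.I) := by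
        rw [← Complex.exp_add]; congr 1; push_cast; ring
      have h1 : (starRingEnd ℂ) i * v0 = ↑(‖k‖) * Complex.exp (-(↑β * Complex.I)) := by
        rw [← hconjk2, hconjk]
      have hobj : (vmax : ℂ) * Complex.exp (↑α * Complex.I) * (v0 / ↑(‖v0‖)) *
          (starRingEnd ℂ) i = ↑(vmax * ‖i‖) * Complex.exp (↑(α - β) * Complex.I) := by
        calc (vmax : ℂ) * Complex.exp (↑α * Complex.I) * (v0 / ↑(‖v0‖)) *
              (starRingEnd ℂ) i
            = (vmax : ℂ) * ((starRingEnd ℂ) i * v0) * Complex.exp (↑α * Complex.I) /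
              ↑(‖v0‖) := by ring
          _ = (vmax : ℂ) * (↑(‖k‖) * Complex.exp (-(↑β * Complex.I))) *
              Complex.exp (↑α * Complex.I) / ↑(‖v0‖) := by rw [h1]
          _ = (vmax : ℂ) * ↑(‖k‖) / ↑(‖v0‖) *
              (Complex.exp (↑α * Complex.I) * Complex.exp (-(↑β * Complex.I))) := by ring
          _ = (vmax : ℂ) * ↑(‖k‖) / ↑(‖v0‖) *
              Complex.exp (↑(α - β) * Complex.I) := by rw [hexp]
          _ = ↑(vmax * ‖i‖) * Complex.exp (↑(α - β) * Complex.I) := by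
              rw [hka]; push_cast
              field_simp [Complex.ofReal_ne_zero.mpr hv0a.ne']
      rw [hobj, Complex.re_ofReal_mul, Complex.exp_ofReal_mul_I_re, hαβ, mul_assoc]
  · -- upper bound
    rintro p ⟨v, ⟨hv1, hv2⟩, rfl⟩
    set x := (v * (starRingEnd ℂ) v0).re with hxdef
    set y := (v * (starRingEnd ℂ) v0).im with hydef
    have hxy : x ^ 2 + y ^ 2 ≤ (vmax * ‖v0‖) ^ 2 := by
      have h1 : x ^ 2 + y ^ 2 = (‖v * (starRingEnd ℂ) v0‖) ^ 2 := by
        rw [Complex.sq_norm, Complex.normSq_apply]; ring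
      rw [h1, norm_mul, Complex.norm_conj]
      exact pow_le_pow_left₀ (by positivity)
        (mul_le_mul_of_nonneg_right hv1 (norm_nonneg v0)) 2
    have hwk : (v * (starRingEnd ℂ) v0) * (starRingEnd ℂ) k
        = (v * (starRingEnd ℂ) i) * (↑((‖v0‖) ^ 2) : ℂ) := by
      have h1 : v0 * (starRingEnd ℂ) v0 = (↑((‖v0‖) ^ 2) : ℂ) := by
        rw [Complex.mul_conj, Complex.normSq_eq_norm_sq]
      calc (v * (starRingEnd ℂ) v0) * (starRingEnd ℂ) k
          = (v * (starRingEnd ℂ) v0) * ((starRingEnd ℂ) i * v0) := by rw [hconjk2]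
        _ = (v * (starRingEnd ℂ) i) * (v0 * (starRingEnd ℂ) v0) := by ring
        _ = (v * (starRingEnd ℂ) i) * (↑((‖v0‖) ^ 2) : ℂ) := by rw [h1]
    have hrel : (v * (starRingEnd ℂ) i).re * (‖v0‖) ^ 2 = x * k.re + y * k.im := by
      have h2 := congrArg Complex.re hwk
      rw [Complex.mul_re, Complex.conj_re, Complex.conj_im] at h2
      rw [mul_comm (v * (starRingEnd ℂ) i) _, Complex.re_ofReal_mul] at h2
      rw [← hxdef, ← hydef] at h2
      linarith
    set Y : ℝ := if 0 ≤ β then y else -y with hYdef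
    have hcore : x * Real.cos δ + Y * Real.sin δ
        ≤ vmax * ‖v0‖ * Real.cos (max (δ - φ) 0) := by
      apply core_ineq (vmin * ‖v0‖) (vmax * ‖v0‖) φ δ x Y
        (by positivity) (mul_le_mul_of_nonneg_right hle (norm_nonneg v0)) ?_ hδ0 hδπ hv2 ?_
      · rw [hφ, mul_div_mul_right _ _ hv0a.ne']
      · have h3 : Y ^ 2 = y ^ 2 := by rw [hYdef]; split <;> ring
        rw [h3]; exact hxy
    have hβY : x * Real.cos β + y * Real.sin β = x * Real.cos δ + Y * Real.sin δ := by
      by_cases hb : 0 ≤ β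
      · have hβδ : β = δ := by rw [hδ]; exact (_root_.abs_of_nonneg hb).symm
        rw [hYdef, if_pos hb, hβδ]
      · have hβδ : β = -δ := by rw [hδ, _root_.abs_of_neg (lt_of_not_ge hb)]; ring
        rw [hYdef, if_neg hb, hβδ, Real.cos_neg, Real.sin_neg]; ring
    have hfin : x * k.re + y * k.im
        ≤ ‖k‖ * (vmax * ‖v0‖ * Real.cos (max (δ - φ) 0)) := by
      rw [hkre, hkim]
      calc x * (‖k‖ * Real.cos β) + y * (‖k‖ * Real.sin β)
          = ‖k‖ * (x * Real.cos β + y * Real.sin β) := by ring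
        _ = ‖k‖ * (x * Real.cos δ + Y * Real.sin δ) := by rw [hβY]
        _ ≤ ‖k‖ * (vmax * ‖v0‖ * Real.cos (max (δ - φ) 0)) :=
            mul_le_mul_of_nonneg_left hcore (norm_nonneg k)
    rw [hka] at hfin
    rw [← hrel] at hfin
    have ha2 : (0:ℝ) < ‖v0‖ ^ 2 := by positivity
    refine le_of_mul_le_mul_right ?_ ha2
    calc (v * (starRingEnd ℂ) i).re * ‖v0‖ ^ 2
        ≤ ‖i‖ * ‖v0‖ * (vmax * ‖v0‖ * Real.cos (max (δ - φ) 0)) :=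
          hfin
      _ = vmax * ‖i‖ * Real.cos (max (δ - φ) 0) * ‖v0‖ ^ 2 := by ring
end

section
/- Let vmin, vmax be real numbers with 0 < vmin ≤ vmax, let v0 be a nonzero complex number with θ = arg(v0), let φ = arccos(vmin/vmax), and let pmax be real. For a nonzero complex number i, the following are equivalent: (a) Re(v · conj(i)) ≤ pmax for every v in S_V = {v ∈ ℂ : |v| ≤ vmax and Re(v · conj(v0)) ≥ vmin · |v0|}; (b) the conjunction of: (i) if |arg(i · conj(v0))| ≤ φ then vmax · |i| ≤ pmax, (ii) vmax · (Re(i)·cos(θ − φ) + Im(i)·sin(θ − φ)) ≤ pmax, and (iii) vmax · (Re(i)·cos(θ + φ) + Im(i)·sin(θ + φ)) ≤ pmax. (The constraints (13) exactly describe the set of currents that are robustly feasible for the active-power upper bound over the voltage feasibility domain.) -/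
lemma sq_le_on (x y : ℝ) (hy : 0 ≤ y) (h : x^2 ≤ y^2) : x ≤ y := by
  rcases le_or_gt x 0 with hx | hx
  · linarith
  · nlinarith

set_option maxHeartbeats 1600000 in
lemma core_helper (vmin vmax s r a b c d : ℝ)
    (hmin : 0 < vmin) (hle : vmin ≤ vmax)
    (hs0 : 0 ≤ s) (hs2 : s^2 = vmax^2 - vmin^2)
    (hr0 : 0 ≤ r) (hr2 : r^2 = c^2 + d^2)
    (ha : vmin ≤ a) (hab : a^2 + b^2 ≤ vmax^2)
    (hd : 0 ≤ d)
    (hcone : vmax * c < vmin * r) :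
    a * c + b * d ≤ vmin * c + s * d := by
  have hvmax : 0 < vmax := lt_of_lt_of_le hmin hle
  have hbs : b ≤ s := by nlinarith
  by_cases hc : c ≤ 0
  · have h1 : a * c ≤ vmin * c := by nlinarith
    have h2 : b * d ≤ s * d := by nlinarith
    linarith
  · push_neg at hc
    have h5 : vmax^2 * c^2 < vmin^2 * r^2 := by
      have h0 : 0 ≤ vmax * c := by positivity
      nlinarith
    have h6 : s^2 * c^2 < vmin^2 * d^2 := by nlinarith
    have hsc : s * c ≤ vmin * d := by
      nlinarith [mul_nonneg hs0 hc.le, mul_nonneg hmin.le hd]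
    have hb2 : b^2 ≤ vmax^2 - a^2 := by nlinarith
    have hy : 0 ≤ vmax^2 - vmin*a := by nlinarith
    have hsb : s * b ≤ vmax^2 - vmin * a := by
      apply sq_le_on _ _ hy
      have h := mul_le_mul_of_nonneg_left hb2 (sq_nonneg s)
      nlinarith [sq_nonneg (vmax*(a - vmin))]
    rcases eq_or_lt_of_le hs0 with hseq | hspos
    · -- s = 0
      clear hcone h5 h6 hsc hsb hbs hb2 hy hr2 hr0 hd hc
      rw [← hseq] at hs2
      have hsq : vmax^2 = vmin^2 := by nlinarith [hs2]
      have hvv : vmax = vmin := le_antisymm (by nlinarith) hle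
      have hb0 : b = 0 := by nlinarith [sq_nonneg b]
      have ha0 : a = vmin := le_antisymm (by nlinarith) ha
      rw [ha0, hb0, ← hseq]
    · have e1 : (a - vmin) * (s*c) ≤ (a - vmin) * (vmin * d) :=
        mul_le_mul_of_nonneg_left hsc (by linarith)
      have e2 : vmin * (a - vmin) ≤ s^2 - s*b := by nlinarith
      have e3 : (vmin*(a-vmin)) * d ≤ (s^2 - s*b)*d :=
        mul_le_mul_of_nonneg_right e2 hd
      have key : s * (a * c + b * d) ≤ s * (vmin * c + s * d) := by nlinarith [e1, e3]
      exact le_of_mul_le_mul_left key hspos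

set_option maxHeartbeats 1600000 in
lemma core (vmin vmax s r a b c d pmax : ℝ)
    (hmin : 0 < vmin) (hle : vmin ≤ vmax)
    (hs0 : 0 ≤ s) (hs2 : s^2 = vmax^2 - vmin^2)
    (hr0 : 0 ≤ r) (hr2 : r^2 = c^2 + d^2)
    (ha : vmin ≤ a) (hab : a^2 + b^2 ≤ vmax^2)
    (h1 : vmin * r ≤ vmax * c → vmax * r ≤ pmax)
    (h2 : vmin * c - s * d ≤ pmax)
    (h3 : vmin * c + s * d ≤ pmax) :
    a * c + b * d ≤ pmax := by
  have hvmax : 0 < vmax := lt_of_lt_of_le hmin hle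
  by_cases hcone : vmin * r ≤ vmax * c
  · have hp := h1 hcone
    have cs : a * c + b * d ≤ vmax * r := by
      nlinarith [sq_nonneg (a*d - b*c), sq_nonneg (a*c + b*d - vmax*r),
        mul_nonneg hvmax.le hr0, sq_nonneg (a*c+b*d)]
    linarith
  · push_neg at hcone
    rcases le_or_gt 0 d with hd | hd
    · have := core_helper vmin vmax s r a b c d hmin hle hs0 hs2 hr0 hr2 ha hab hd hcone
      linarith
    · have hr2' : r^2 = c^2 + (-d)^2 := by rw [hr2]; ring
      have := core_helper vmin vmax s r a (-b) c (-d) hmin hle hs0 hs2 hr0 hr2' ha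
        (by nlinarith) (by linarith) hcone
      nlinarith

lemma sq_le_on' (x y : ℝ) (hy : 0 ≤ y) (h : x^2 ≤ y^2) : x ≤ y := by
  rcases le_or_gt x 0 with hx | hx
  · linarith
  · nlinarith

lemma abs_arg_le_iff_cos (z : ℂ) (hz : z ≠ 0) (φ : ℝ) (hφ0 : 0 ≤ φ) (hφpi : φ ≤ Real.pi) :
    |Complex.arg z| ≤ φ ↔ Real.cos φ ≤ Real.cos (Complex.arg z) := by
  constructor
  · intro h
    have := Real.cos_le_cos_of_nonneg_of_le_pi (abs_nonneg _) hφpi h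
    rwa [Real.cos_abs] at this
  · intro h
    have h' : Real.cos φ ≤ Real.cos |Complex.arg z| := by rwa [Real.cos_abs]
    have h2 := Real.monotone_arcsin h'
    have e1 : Real.arccos (Real.cos |Complex.arg z|) = |Complex.arg z| :=
      Real.arccos_cos (abs_nonneg _) (Complex.abs_arg_le_pi z)
    have e2 : Real.arccos (Real.cos φ) = φ := Real.arccos_cos hφ0 hφpi
    rw [Real.arccos_eq_pi_div_two_sub_arcsin] at e1 e2
    linarith


set_option maxHeartbeats 3200000 in
/-- The constraints (13) exactly describe the set of currents that are
robustly feasible for the active-power upper bound over the voltage feasibility domain. -/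
theorem robust_active_power_constraints_characterization
    (vmin vmax : ℝ) (hmin : 0 < vmin) (hle : vmin ≤ vmax)
    (v0 : ℂ) (hv0 : v0 ≠ 0)
    (θ φ : ℝ) (hθ : θ = Complex.arg v0) (hφ : φ = Real.arccos (vmin / vmax))
    (pmax : ℝ) (i : ℂ) (hi : i ≠ 0) :
    (∀ v ∈ {v : ℂ | ‖v‖ ≤ vmax ∧
        vmin * ‖v0‖ ≤ (v * (starRingEnd ℂ) v0).re},
      (v * (starRingEnd ℂ) i).re ≤ pmax)
    ↔ ((|Complex.arg (i * (starRingEnd ℂ) v0)| ≤ φ → vmax * ‖i‖ ≤ pmax)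
        ∧ vmax * (i.re * Real.cos (θ - φ) + i.im * Real.sin (θ - φ)) ≤ pmax
        ∧ vmax * (i.re * Real.cos (θ + φ) + i.im * Real.sin (θ + φ)) ≤ pmax) := by
  have hvmax : 0 < vmax := lt_of_lt_of_le hmin hle
  set K := ‖v0‖ with hKdef
  set R := ‖i‖ with hRdef
  have hK : 0 < K := norm_pos_iff.mpr hv0
  have hR : 0 < R := norm_pos_iff.mpr hi
  have hv0re : v0.re = K * Real.cos θ := by
    rw [hθ, Complex.cos_arg hv0, ← hKdef]; field_simp
  have hv0im : v0.im = K * Real.sin θ := by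
    rw [hθ, Complex.sin_arg, ← hKdef]; field_simp
  -- φ facts
  have hratio1 : vmin / vmax ≤ 1 := (div_le_one hvmax).mpr hle
  have hratio0 : (-1:ℝ) ≤ vmin / vmax := by
    have : (0:ℝ) ≤ vmin / vmax := by positivity
    linarith
  have hcos : Real.cos φ = vmin / vmax := by rw [hφ]; exact Real.cos_arccos hratio0 hratio1
  have hcphi : vmax * Real.cos φ = vmin := by rw [hcos]; field_simp
  have hφ0 : 0 ≤ φ := hφ ▸ Real.arccos_nonneg _
  have hφpi : φ ≤ Real.pi := hφ ▸ Real.arccos_le_pi _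
  have hsin0 : 0 ≤ Real.sin φ := Real.sin_nonneg_of_nonneg_of_le_pi hφ0 hφpi
  have hpyφ : Real.sin φ ^ 2 + Real.cos φ ^ 2 = 1 := Real.sin_sq_add_cos_sq φ
  have hs0 : 0 ≤ vmax * Real.sin φ := by positivity
  have hs2 : (vmax * Real.sin φ)^2 = vmax^2 - vmin^2 := by
    linear_combination vmax^2 * hpyφ - (vmax * Real.cos φ + vmin) * hcphi
  have hpyθ : Real.cos θ ^ 2 + Real.sin θ ^ 2 = 1 := Real.cos_sq_add_sin_sq θ
  -- z facts
  set z := i * (starRingEnd ℂ) v0 with hzdef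
  have hz : z ≠ 0 := mul_ne_zero hi (star_ne_zero.mpr hv0)
  have hzabs : ‖z‖ = R * K := by
    rw [hzdef, norm_mul, Complex.norm_conj]
  have hzre : z.re = K * (i.re * Real.cos θ + i.im * Real.sin θ) := by
    rw [hzdef]
    simp only [Complex.mul_re, Complex.conj_re, Complex.conj_im, hv0re, hv0im]
    ring
  have hR2 : R ^ 2 = i.re ^ 2 + i.im ^ 2 := by
    rw [hRdef, Complex.sq_norm, Complex.normSq_apply]; ring
  -- cone condition iff
  have hcone_iff : |Complex.arg z| ≤ φ ↔
      vmin * R ≤ vmax * (i.re * Real.cos θ + i.im * Real.sin θ) := by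
    rw [abs_arg_le_iff_cos z hz φ hφ0 hφpi, Complex.cos_arg hz, hzabs, hzre, hcos]
    rw [div_le_div_iff₀ hvmax (by positivity : (0:ℝ) < R * K)]
    rw [show vmin * (R * K) = (vmin * R) * K by ring,
      show K * (i.re * Real.cos θ + i.im * Real.sin θ) * vmax =
        (vmax * (i.re * Real.cos θ + i.im * Real.sin θ)) * K by ring,
      mul_le_mul_iff_of_pos_right hK]
  constructor
  · -- robust feasibility implies the three constraints
    intro h
    refine ⟨?_, ?_, ?_⟩
    · intro harg
      have hcone := hcone_iff.mp harg
      set w : ℂ := ((vmax / R : ℝ) : ℂ) * i with hwdef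
      have hwabs : ‖w‖ = vmax := by
        rw [hwdef, norm_mul, Complex.norm_real, Real.norm_eq_abs, abs_of_pos (by positivity), ← hRdef]
        field_simp
      have hwre : (w * (starRingEnd ℂ) v0).re = (vmax / R) * z.re := by
        rw [hwdef, hzdef]
        simp only [Complex.mul_re, Complex.mul_im, Complex.ofReal_re, Complex.ofReal_im]
        ring
      have hmem2 : vmin * K ≤ (w * (starRingEnd ℂ) v0).re := by
        rw [hwre, hzre, div_mul_eq_mul_div, le_div_iff₀ hR]
        have := mul_le_mul_of_nonneg_left hcone hK.le
        linarith
      have hval : (w * (starRingEnd ℂ) i).re = vmax * R := by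
        rw [hwdef]
        simp only [Complex.mul_re, Complex.mul_im, Complex.ofReal_re, Complex.ofReal_im,
          Complex.conj_re, Complex.conj_im]
        field_simp
        linear_combination (-vmax) * hR2
      have := h w ⟨le_of_eq hwabs, hmem2⟩
      rwa [hval] at this
    · -- corner point at angle θ - φ
      have hmem : (⟨vmax * Real.cos (θ - φ), vmax * Real.sin (θ - φ)⟩ : ℂ) ∈
          {v : ℂ | ‖v‖ ≤ vmax ∧ vmin * K ≤ (v * (starRingEnd ℂ) v0).re} := by
        constructor
        · rw [Complex.norm_def, Complex.normSq_mk]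
          rw [show vmax * Real.cos (θ - φ) * (vmax * Real.cos (θ - φ)) +
              vmax * Real.sin (θ - φ) * (vmax * Real.sin (θ - φ)) = vmax ^ 2 by
            linear_combination vmax^2 * Real.sin_sq_add_cos_sq (θ - φ)]
          rw [Real.sqrt_sq hvmax.le]
        · simp only [Set.mem_setOf_eq, Complex.mul_re, Complex.conj_re, Complex.conj_im,
            hv0re, hv0im]
          rw [Real.cos_sub, Real.sin_sub]
          apply le_of_eq
          linear_combination (-K) * hcphi - vmax * K * Real.cos φ * hpyθ
      have := h _ hmem
      simp only [Complex.mul_re, Complex.conj_re, Complex.conj_im] at this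
      linarith
    · -- corner point at angle θ + φ
      have hmem : (⟨vmax * Real.cos (θ + φ), vmax * Real.sin (θ + φ)⟩ : ℂ) ∈
          {v : ℂ | ‖v‖ ≤ vmax ∧ vmin * K ≤ (v * (starRingEnd ℂ) v0).re} := by
        constructor
        · rw [Complex.norm_def, Complex.normSq_mk]
          rw [show vmax * Real.cos (θ + φ) * (vmax * Real.cos (θ + φ)) +
              vmax * Real.sin (θ + φ) * (vmax * Real.sin (θ + φ)) = vmax ^ 2 by
            linear_combination vmax^2 * Real.sin_sq_add_cos_sq (θ + φ)]
          rw [Real.sqrt_sq hvmax.le]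
        · simp only [Set.mem_setOf_eq, Complex.mul_re, Complex.conj_re, Complex.conj_im,
            hv0re, hv0im]
          rw [Real.cos_add, Real.sin_add]
          apply le_of_eq
          linear_combination (-K) * hcphi - vmax * K * Real.cos φ * hpyθ
      have := h _ hmem
      simp only [Complex.mul_re, Complex.conj_re, Complex.conj_im] at this
      linarith
  · -- the three constraints imply robust feasibility
    rintro ⟨H1, H2, H3⟩ v hv
    obtain ⟨hv1, hv2⟩ := hv
    have habs : v.re ^ 2 + v.im ^ 2 ≤ vmax ^ 2 := by
      have h1 : ‖v‖ ^ 2 ≤ vmax ^ 2 :=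
        pow_le_pow_left₀ (norm_nonneg v) hv1 2
      rwa [Complex.sq_norm, Complex.normSq_apply, ← sq, ← sq] at h1
    have hvre : (v * (starRingEnd ℂ) v0).re = K * (v.re * Real.cos θ + v.im * Real.sin θ) := by
      simp only [Complex.mul_re, Complex.conj_re, Complex.conj_im, hv0re, hv0im]
      ring
    have ha : vmin ≤ v.re * Real.cos θ + v.im * Real.sin θ := by
      rw [hvre] at hv2
      have h' : K * vmin ≤ K * (v.re * Real.cos θ + v.im * Real.sin θ) := by linarith
      exact (mul_le_mul_iff_of_pos_left hK).mp h'
    have hab : (v.re * Real.cos θ + v.im * Real.sin θ) ^ 2 +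
        (-v.re * Real.sin θ + v.im * Real.cos θ) ^ 2 ≤ vmax ^ 2 := by
      have key : (v.re * Real.cos θ + v.im * Real.sin θ) ^ 2 +
          (-v.re * Real.sin θ + v.im * Real.cos θ) ^ 2 = v.re ^ 2 + v.im ^ 2 := by
        linear_combination (v.re^2 + v.im^2) * hpyθ
      linarith
    have hr2 : R ^ 2 = (i.re * Real.cos θ + i.im * Real.sin θ) ^ 2 +
        (-i.re * Real.sin θ + i.im * Real.cos θ) ^ 2 := by
      linear_combination hR2 - (i.re^2 + i.im^2) * hpyθ
    have h2' : vmin * (i.re * Real.cos θ + i.im * Real.sin θ) -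
        (vmax * Real.sin φ) * (-i.re * Real.sin θ + i.im * Real.cos θ) ≤ pmax := by
      rw [Real.cos_sub, Real.sin_sub] at H2
      have he : vmax * (i.re * (Real.cos θ * Real.cos φ + Real.sin θ * Real.sin φ) +
          i.im * (Real.sin θ * Real.cos φ - Real.cos θ * Real.sin φ)) =
          vmin * (i.re * Real.cos θ + i.im * Real.sin θ) -
          (vmax * Real.sin φ) * (-i.re * Real.sin θ + i.im * Real.cos θ) := by
        linear_combination (i.re * Real.cos θ + i.im * Real.sin θ) * hcphi
      linarith
    have h3' : vmin * (i.re * Real.cos θ + i.im * Real.sin θ) +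
        (vmax * Real.sin φ) * (-i.re * Real.sin θ + i.im * Real.cos θ) ≤ pmax := by
      rw [Real.cos_add, Real.sin_add] at H3
      have he : vmax * (i.re * (Real.cos θ * Real.cos φ - Real.sin θ * Real.sin φ) +
          i.im * (Real.sin θ * Real.cos φ + Real.cos θ * Real.sin φ)) =
          vmin * (i.re * Real.cos θ + i.im * Real.sin θ) +
          (vmax * Real.sin φ) * (-i.re * Real.sin θ + i.im * Real.cos θ) := by
        linear_combination (i.re * Real.cos θ + i.im * Real.sin θ) * hcphi
      linarith
    have h1' : vmin * R ≤ vmax * (i.re * Real.cos θ + i.im * Real.sin θ) →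
        vmax * R ≤ pmax := fun hc => H1 (hcone_iff.mpr hc)
    have hgoal : (v * (starRingEnd ℂ) i).re =
        (v.re * Real.cos θ + v.im * Real.sin θ) * (i.re * Real.cos θ + i.im * Real.sin θ) +
        (-v.re * Real.sin θ + v.im * Real.cos θ) * (-i.re * Real.sin θ + i.im * Real.cos θ) := by
      simp only [Complex.mul_re, Complex.conj_re, Complex.conj_im]
      linear_combination (-(v.re * i.re + v.im * i.im)) * hpyθ
    rw [hgoal]
    exact core vmin vmax (vmax * Real.sin φ) R _ _ _ _ pmax hmin hle hs0 hs2 hR.le hr2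
      ha hab h1' h2' h3'
end

section
/- Let vmin, vmax be real numbers with 0 < vmin ≤ vmax, let v0 be a nonzero complex number with θ = arg(v0), let φ = arccos(vmin/vmax), and let pmax be real. The set of complex numbers i satisfying all of: (i) if |arg(i · conj(v0))| ≤ φ then vmax · |i| ≤ pmax, (ii) vmax · (Re(i)·cos(θ − φ) + Im(i)·sin(θ − φ)) ≤ pmax, and (iii) vmax · (Re(i)·cos(θ + φ) + Im(i)·sin(θ + φ)) ≤ pmax, is a convex subset of the plane. (The conditionally-described robust current feasible region of constraints (13) is convex.) -/
lemma cos_bound (φ ψ β : ℝ) (hφ0 : 0 ≤ φ) (hψl : -φ ≤ ψ) (hψr : ψ ≤ φ)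
    (hβφ : φ < β) (hβπ : β ≤ Real.pi) :
    Real.cos (β - ψ) ≤ Real.cos (β - φ) := by
  have h1 : 0 ≤ Real.sin ((φ - ψ)/2) := by
    apply Real.sin_nonneg_of_nonneg_of_le_pi <;> nlinarith [Real.pi_pos]
  have h2 : 0 ≤ Real.sin (β - (φ+ψ)/2) := by
    apply Real.sin_nonneg_of_nonneg_of_le_pi <;> nlinarith
  have key := Real.cos_sub_cos (β - φ) (β - ψ)
  rw [show ((β-φ) + (β-ψ))/2 = β - (φ+ψ)/2 by ring,
      show ((β-φ) - (β-ψ))/2 = -((φ-ψ)/2) by ring, Real.sin_neg] at key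
  nlinarith

lemma re_mul_exp (w : ℂ) (t : ℝ) :
    (w * Complex.exp ((t:ℂ) * Complex.I)).re = ‖w‖ * Real.cos (Complex.arg w + t) := by
  conv_lhs => rw [← Complex.norm_mul_exp_arg_mul_I w]
  rw [mul_assoc, ← Complex.exp_add,
    show (Complex.arg w : ℂ) * Complex.I + (t:ℂ) * Complex.I = ((Complex.arg w + t : ℝ)) * Complex.I by push_cast; ring]
  rw [Complex.re_ofReal_mul, Complex.exp_ofReal_mul_I_re]

lemma halfplane_bound (c p φ ψ r β : ℝ) (hc : 0 < c)
    (hr : 0 ≤ r) (hβl : -Real.pi < β) (hβr : β ≤ Real.pi)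
    (h1 : |β| ≤ φ → c * r ≤ p)
    (h2 : c * (r * Real.cos (β + φ)) ≤ p)
    (h3 : c * (r * Real.cos (β + -φ)) ≤ p)
    (hψ : |ψ| ≤ φ) :
    c * (r * Real.cos (β + -ψ)) ≤ p := by
  obtain ⟨hψl, hψr⟩ := abs_le.mp hψ
  have hφ0 : 0 ≤ φ := le_trans (abs_nonneg ψ) hψ
  by_cases hb : |β| ≤ φ
  · have hcr := h1 hb
    have := mul_le_mul_of_nonneg_left (Real.cos_le_one (β + -ψ)) (mul_nonneg hc.le hr)
    nlinarith
  · rw [abs_le, not_and_or] at hb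
    push_neg at hb
    rcases hb with hb | hb
    · -- β < -φ
      have hcos := cos_bound φ (-ψ) (-β) hφ0 (by linarith) (by linarith) (by linarith) (by linarith)
      rw [show -β - -ψ = -(β - ψ) by ring, show -β - φ = -(β + φ) by ring,
        Real.cos_neg, Real.cos_neg, show β - ψ = β + -ψ by ring] at hcos
      have := mul_le_mul_of_nonneg_left hcos (mul_nonneg hc.le hr)
      nlinarith
    · -- φ < β
      have hcos := cos_bound φ ψ β hφ0 hψl hψr hb hβr
      rw [show β - ψ = β + -ψ by ring, show β - φ = β + -φ by ring] at hcos
      have := mul_le_mul_of_nonneg_left hcos (mul_nonneg hc.le hr)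
      nlinarith

lemma re_key (v0 : ℂ) (hv0 : v0 ≠ 0) (x : ℂ) (s : ℝ) :
    (x * (starRingEnd ℂ) v0 * Complex.exp ((s:ℂ) * Complex.I)).re
      = ‖v0‖ * (x.re * Real.cos (Complex.arg v0 - s) + x.im * Real.sin (Complex.arg v0 - s)) := by
  have habs : ‖v0‖ ≠ 0 := norm_ne_zero_iff.mpr hv0
  have hre : ‖v0‖ * Real.cos (Complex.arg v0) = v0.re := by
    rw [Complex.cos_arg hv0]; field_simp
  have him : ‖v0‖ * Real.sin (Complex.arg v0) = v0.im := by
    rw [Complex.sin_arg]; field_simp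
  rw [Real.cos_sub, Real.sin_sub]
  simp only [Complex.exp_mul_I, Complex.mul_re, Complex.mul_im, Complex.conj_re, Complex.conj_im,
    Complex.cos_ofReal_re, Complex.cos_ofReal_im, Complex.sin_ofReal_re, Complex.sin_ofReal_im,
    Complex.I_re, Complex.I_im, Complex.add_re, Complex.add_im, Complex.mul_re, Complex.mul_im]
  linear_combination (-(x.re * Real.cos s - x.im * Real.sin s)) * hre + (-(x.re * Real.sin s + x.im * Real.cos s)) * him


/-- The conditionally-described robust current feasible region of
constraints (13) is a convex subset of the plane. -/
theorem robust_current_region_convex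
    (vmin vmax : ℝ) (hmin : 0 < vmin) (hle : vmin ≤ vmax)
    (v0 : ℂ) (hv0 : v0 ≠ 0)
    (θ φ : ℝ) (hθ : θ = Complex.arg v0) (hφ : φ = Real.arccos (vmin / vmax))
    (pmax : ℝ) :
    Convex ℝ {i : ℂ |
      (|Complex.arg (i * (starRingEnd ℂ) v0)| ≤ φ → vmax * ‖i‖ ≤ pmax)
      ∧ vmax * (i.re * Real.cos (θ - φ) + i.im * Real.sin (θ - φ)) ≤ pmax
      ∧ vmax * (i.re * Real.cos (θ + φ) + i.im * Real.sin (θ + φ)) ≤ pmax} := by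
  intro x hx y hy a b ha hb hab
  obtain ⟨hx1, hx2, hx3⟩ := hx
  obtain ⟨hy1, hy2, hy3⟩ := hy
  have hvmax : 0 < vmax := lt_of_lt_of_le hmin hle
  have hA : 0 < ‖v0‖ := norm_pos_iff.mpr hv0
  set c : ℝ := vmax / ‖v0‖ with hcdef
  have hc : 0 < c := div_pos hvmax hA
  have hcA : c * ‖v0‖ = vmax := div_mul_cancel₀ vmax hA.ne'
  have hzre : (a • x + b • y).re = a * x.re + b * y.re := by
    simp [Complex.add_re, Complex.smul_re]
  have hzim : (a • x + b • y).im = a * x.im + b * y.im := by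
    simp [Complex.add_im, Complex.smul_im]
  -- helper converting linear constraints
  have hw : ∀ (w : ℂ) (t : ℝ),
      c * (‖w * (starRingEnd ℂ) v0‖ * Real.cos (Complex.arg (w * (starRingEnd ℂ) v0) + t))
        = vmax * (w.re * Real.cos (θ - t) + w.im * Real.sin (θ - t)) := by
    intro w t
    rw [← re_mul_exp, re_key v0 hv0 w t, ← hθ, ← mul_assoc, hcA]
  have habsW : ∀ w : ℂ, ‖w * (starRingEnd ℂ) v0‖ = ‖w‖ * ‖v0‖ := by
    intro w; rw [norm_mul, Complex.norm_conj]
  have hcabs : ∀ w : ℂ, c * ‖w * (starRingEnd ℂ) v0‖ = vmax * ‖w‖ := by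
    intro w
    rw [habsW, show c * (‖w‖ * ‖v0‖) = c * ‖v0‖ * ‖w‖ by ring,
      hcA]
  refine ⟨?_, ?_, ?_⟩
  · -- conditional constraint
    intro harg
    set z := a • x + b • y with hz
    set ψ := Complex.arg (z * (starRingEnd ℂ) v0) with hψdef
    have key : ∀ w : ℂ,
        (|Complex.arg (w * (starRingEnd ℂ) v0)| ≤ φ → vmax * ‖w‖ ≤ pmax) →
        vmax * (w.re * Real.cos (θ - φ) + w.im * Real.sin (θ - φ)) ≤ pmax →
        vmax * (w.re * Real.cos (θ + φ) + w.im * Real.sin (θ + φ)) ≤ pmax →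
        c * (w * (starRingEnd ℂ) v0 * Complex.exp (((-ψ : ℝ) : ℂ) * Complex.I)).re ≤ pmax := by
      intro w h1 h2 h3
      rw [re_mul_exp]
      apply halfplane_bound c pmax φ ψ _ _ hc (norm_nonneg _)
        (Complex.neg_pi_lt_arg _) (Complex.arg_le_pi _) ?_ ?_ ?_ harg
      · intro hb'
        rw [hcabs]; exact h1 hb'
      · rw [hw]; exact h2
      · rw [hw, show θ - -φ = θ + φ by ring]; exact h3
    have keyx := key x hx1 hx2 hx3
    have keyy := key y hy1 hy2 hy3
    have hsplit : (z * (starRingEnd ℂ) v0 * Complex.exp (((-ψ : ℝ) : ℂ) * Complex.I)).re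
        = a * (x * (starRingEnd ℂ) v0 * Complex.exp (((-ψ : ℝ) : ℂ) * Complex.I)).re
          + b * (y * (starRingEnd ℂ) v0 * Complex.exp (((-ψ : ℝ) : ℂ) * Complex.I)).re := by
      rw [hz]
      simp only [Complex.real_smul, add_mul, Complex.add_re, mul_assoc, Complex.re_ofReal_mul]
    have habs_eq : vmax * ‖z‖
        = c * (z * (starRingEnd ℂ) v0 * Complex.exp (((-ψ : ℝ) : ℂ) * Complex.I)).re := by
      rw [re_mul_exp, ← hψdef, show ψ + -ψ = (0:ℝ) by ring, Real.cos_zero, mul_one, hcabs]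
    rw [habs_eq, hsplit]
    have h1 := mul_le_mul_of_nonneg_left keyx ha
    have h2 := mul_le_mul_of_nonneg_left keyy hb
    have hp : a * pmax + b * pmax = pmax := by rw [← add_mul, hab, one_mul]
    nlinarith
  · rw [hzre, hzim]
    have hp : a * pmax + b * pmax = pmax := by rw [← add_mul, hab, one_mul]
    nlinarith [mul_le_mul_of_nonneg_left hx2 ha, mul_le_mul_of_nonneg_left hy2 hb]
  · rw [hzre, hzim]
    have hp : a * pmax + b * pmax = pmax := by rw [← add_mul, hab, one_mul]
    nlinarith [mul_le_mul_of_nonneg_left hx3 ha, mul_le_mul_of_nonneg_left hy3 hb]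
end

section
/- Let vmin, vmax be real numbers with 0 < vmin ≤ vmax, let v0 be a nonzero complex number with θ = arg(v0), let φ = arccos(vmin/vmax), and let qmax be real. For a nonzero complex number i, the following are equivalent: (a) the reactive power Im(v · conj(i)) ≤ qmax for every v in S_V = {v ∈ ℂ : |v| ≤ vmax and Re(v · conj(v0)) ≥ vmin · |v0|}; (b) the conjunction of: (i) if |arg(I·i · conj(v0))| ≤ φ (where I is the imaginary unit) then vmax · |i| ≤ qmax, (ii) vmax · (Re(i)·sin(θ − φ) − Im(i)·cos(θ − φ)) ≤ qmax, and (iii) vmax · (Re(i)·sin(θ + φ) − Im(i)·cos(θ + φ)) ≤ qmax. (The robust reactive-power constraints are obtained from the active-power ones by rotating the current by 90 degrees.) -/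
private lemma cauchy_aux (U W R zr zi zn : ℝ) (hUW : U^2+W^2 ≤ R^2) (hR : 0 ≤ R)
    (hz : zr^2 + zi^2 = zn^2) (hzn : 0 ≤ zn) : U*zr + W*zi ≤ R*zn := by
  nlinarith [sq_nonneg (U*zi - W*zr), sq_nonneg (U*zr + W*zi - R*zn), mul_nonneg hR hzn,
    sq_nonneg (U*zr+W*zi)]

private lemma core_aux (vmin vmax m qmax sφ cφ U W zr zi zn : ℝ)
    (hm : 0 < m) (hsφ : 0 < sφ) (hpyth : sφ^2 + cφ^2 = 1) (hcφ : vmax * cφ = vmin)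
    (hvmin : 0 < vmin) (hvmax : 0 < vmax)
    (hzi : 0 ≤ zi) (hzr : zr ≤ zn * cφ) (hzn : zr^2 + zi^2 = zn^2)
    (hU : vmin * m ≤ U) (hUW : U^2 + W^2 ≤ vmax^2 * m^2)
    (hC : vmax * (zr * cφ + zi * sφ) ≤ qmax * m) :
    U * zr + W * zi ≤ qmax * m^2 := by
  have hcφ0 : 0 < cφ := by
    have : 0 < vmax * cφ := hcφ ▸ hvmin
    nlinarith
  have hlam2 : 0 ≤ zi * cφ - zr * sφ := by
    rcases le_or_gt zr 0 with h | h
    · nlinarith [mul_nonneg hzi hcφ0.le]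
    · nlinarith [mul_pos h hsφ, mul_nonneg hzi hcφ0.le, sq_nonneg (zi*cφ - zr*sφ)]
  have h1 : U * cφ + W * sφ ≤ vmax * m := by
    nlinarith [sq_nonneg (U*sφ - W*cφ), sq_nonneg (U*cφ + W*sφ - vmax*m), mul_pos hvmax hm]
  have key : sφ * (U * zr + W * zi) ≤ sφ * (qmax * m^2) := by
    have e1 : zi * (U*cφ + W*sφ) ≤ zi * (vmax * m) := mul_le_mul_of_nonneg_left h1 hzi
    have e2 : (zi*cφ - zr*sφ) * (vmin * m) ≤ (zi*cφ - zr*sφ) * U :=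
      mul_le_mul_of_nonneg_left hU hlam2
    have e3 : sφ * (U * zr + W * zi) = zi * (U*cφ + W*sφ) - (zi*cφ - zr*sφ) * U := by ring
    have e4 : zi * (vmax*m) - (zi*cφ - zr*sφ)*(vmin*m) = m * (vmax * (zr*cφ + zi*sφ)) * sφ := by
      linear_combination (-(zi*vmax*m)) * hpyth + ((zi*cφ - zr*sφ)*m) * hcφ
    nlinarith [mul_le_mul_of_nonneg_left hC hm.le]
  exact le_of_mul_le_mul_left key hsφ

private lemma deg_aux (U W b : ℝ) (hb : 0 < b) (h1 : b ≤ U) (h2 : U^2 + W^2 ≤ b^2) :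
    U = b ∧ W = 0 := by
  have hU2 : b^2 ≤ U^2 := by nlinarith
  have hW2 : W^2 = 0 := by nlinarith [sq_nonneg W]
  have hW : W = 0 := (pow_eq_zero_iff two_ne_zero).mp hW2
  constructor
  · nlinarith [sq_nonneg (U - b)]
  · exact hW

set_option maxHeartbeats 1000000 in
/-- The robust reactive-power constraints are obtained from the
active-power ones by rotating the current by 90 degrees: characterization of the
currents robustly feasible for the reactive-power upper bound over `S_V`. -/
theorem robust_reactive_power_constraints_characterization
    (vmin vmax : ℝ) (hmin : 0 < vmin) (hle : vmin ≤ vmax)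
    (v0 : ℂ) (hv0 : v0 ≠ 0)
    (θ φ : ℝ) (hθ : θ = Complex.arg v0) (hφ : φ = Real.arccos (vmin / vmax))
    (qmax : ℝ) (i : ℂ) (hi : i ≠ 0) :
    (∀ v ∈ {v : ℂ | ‖v‖ ≤ vmax ∧
        vmin * ‖v0‖ ≤ (v * (starRingEnd ℂ) v0).re},
      (v * (starRingEnd ℂ) i).im ≤ qmax)
    ↔ ((|Complex.arg (Complex.I * i * (starRingEnd ℂ) v0)| ≤ φ
          → vmax * ‖i‖ ≤ qmax)
        ∧ vmax * (i.re * Real.sin (θ - φ) - i.im * Real.cos (θ - φ)) ≤ qmax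
        ∧ vmax * (i.re * Real.sin (θ + φ) - i.im * Real.cos (θ + φ)) ≤ qmax) := by
  have hvmax : 0 < vmax := lt_of_lt_of_le hmin hle
  set m : ℝ := ‖v0‖ with hm_def
  have hm : 0 < m := by
    have := norm_pos_iff.mpr hv0
    simpa [hm_def] using this
  set z : ℂ := Complex.I * i * (starRingEnd ℂ) v0 with hz_def
  have hzne : z ≠ 0 := by
    apply mul_ne_zero (mul_ne_zero Complex.I_ne_zero hi)
    simpa using hv0
  set cφ : ℝ := Real.cos φ with hcφ_def
  set sφ : ℝ := Real.sin φ with hsφ_def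
  have hr1 : vmin / vmax ≤ 1 := by
    rw [div_le_one hvmax]; exact hle
  have hr0 : 0 < vmin / vmax := div_pos hmin hvmax
  have hcos : cφ = vmin / vmax := by
    rw [hcφ_def, hφ]; exact Real.cos_arccos (by linarith) hr1
  have hcφm : vmax * cφ = vmin := by
    rw [hcos]; field_simp
  have hφ0 : 0 ≤ φ := hφ ▸ Real.arccos_nonneg _
  have hφpi : φ ≤ Real.pi := hφ ▸ Real.arccos_le_pi _
  have hsφ0 : 0 ≤ sφ := Real.sin_nonneg_of_nonneg_of_le_pi hφ0 hφpi
  have hpyth : sφ^2 + cφ^2 = 1 := by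
    rw [hsφ_def, hcφ_def]; exact Real.sin_sq_add_cos_sq φ
  have hp : v0.re = m * Real.cos θ := by
    rw [hθ, Complex.cos_arg hv0]
    field_simp [hm_def]
    rw [hm_def]
  have hq : v0.im = m * Real.sin θ := by
    rw [hθ, Complex.sin_arg]
    field_simp [hm_def]
    rw [hm_def]
  have hzre : z.re = -i.im * v0.re + i.re * v0.im := by
    simp only [hz_def, Complex.mul_re, Complex.mul_im, Complex.I_re, Complex.I_im,
      Complex.conj_re, Complex.conj_im]; ring
  have hzim : z.im = i.re * v0.re + i.im * v0.im := by
    simp only [hz_def, Complex.mul_re, Complex.mul_im, Complex.I_re, Complex.I_im,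
      Complex.conj_re, Complex.conj_im]; ring
  set zn : ℝ := ‖z‖ with hzn_def
  have hznval : zn = ‖i‖ * m := by
    rw [hzn_def, hz_def, hm_def]
    simp [map_mul]
  have hznsq : z.re^2 + z.im^2 = zn^2 := by
    rw [hzn_def, Complex.sq_norm, Complex.normSq_apply]; ring
  have hzn0 : 0 ≤ zn := hzn_def ▸ norm_nonneg z
  have habsi : 0 < ‖i‖ := norm_pos_iff.mpr hi
  -- angle characterization
  have hangle : |Complex.arg z| ≤ φ ↔ zn * cφ ≤ z.re := by
    have h1 : Real.cos φ ≤ Real.cos |Complex.arg z| ↔ |Complex.arg z| ≤ φ :=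
      Real.strictAntiOn_cos.le_iff_ge ⟨hφ0, hφpi⟩ ⟨abs_nonneg _, Complex.abs_arg_le_pi z⟩
    rw [← h1, Real.cos_abs, Complex.cos_arg hzne, ← hcφ_def, ← hzn_def]
    have hznpos : 0 < zn := hzn_def ▸ norm_pos_iff.mpr hzne
    rw [le_div_iff₀ hznpos, mul_comm]
  -- objective identity
  have hobj : ∀ v : ℂ, (v * (starRingEnd ℂ) i).im * m^2 =
      (v * (starRingEnd ℂ) v0).re * z.re + (v * (starRingEnd ℂ) v0).im * z.im := by
    intro v
    have hm2 : m^2 = v0.re^2 + v0.im^2 := by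
      rw [hm_def, Complex.sq_norm, Complex.normSq_apply]; ring
    rw [hzre, hzim, hm2]
    simp [Complex.mul_re, Complex.mul_im]
    ring
  -- corner identities
  have hcornP : vmax * (i.re * Real.sin (θ+φ) - i.im * Real.cos (θ+φ)) * m =
      vmax * (z.re * cφ + z.im * sφ) := by
    rw [hzre, hzim, hp, hq, Real.sin_add, Real.cos_add, ← hcφ_def, ← hsφ_def]
    ring
  have hcornM : vmax * (i.re * Real.sin (θ-φ) - i.im * Real.cos (θ-φ)) * m =
      vmax * (z.re * cφ - z.im * sφ) := by
    rw [hzre, hzim, hp, hq, Real.sin_sub, Real.cos_sub, ← hcφ_def, ← hsφ_def]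
    ring
  constructor
  · intro hL
    have hcorner : ∀ ψ : ℝ,
        Real.cos (ψ - θ) = cφ →
        vmax * (i.re * Real.sin ψ - i.im * Real.cos ψ) ≤ qmax := by
      intro ψ hψ
      set vc : ℂ := (vmax : ℂ) * Complex.exp ((ψ : ℂ) * Complex.I) with hvc_def
      have habs : ‖vc‖ = vmax := by
        rw [hvc_def, norm_mul, Complex.norm_exp_ofReal_mul_I, Complex.norm_real, Real.norm_eq_abs,
          abs_of_pos hvmax, mul_one]
      have hvcre : vc.re = vmax * Real.cos ψ := by
        simp [hvc_def, Complex.exp_ofReal_mul_I_re]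
      have hvcim : vc.im = vmax * Real.sin ψ := by
        simp [hvc_def, Complex.exp_ofReal_mul_I_im]
      have hmem : vmin * m ≤ (vc * (starRingEnd ℂ) v0).re := by
        have hre : (vc * (starRingEnd ℂ) v0).re = vc.re * v0.re + vc.im * v0.im := by
          simp [Complex.mul_re]
        rw [hre, hvcre, hvcim, hp, hq]
        have he : vmax * Real.cos ψ * (m * Real.cos θ) + vmax * Real.sin ψ * (m * Real.sin θ)
            = vmax * cφ * m := by rw [← hψ, Real.cos_sub]; ring
        rw [he, hcφm]
      have hval : (vc * (starRingEnd ℂ) i).im = vmax * (i.re * Real.sin ψ - i.im * Real.cos ψ) := by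
        simp [Complex.mul_im, hvcre, hvcim]
        ring
      have := hL vc ⟨le_of_eq habs, hmem⟩
      rw [hval] at this
      exact this
    refine ⟨?_, ?_, ?_⟩
    · intro harg
      have hzrge : zn * cφ ≤ z.re := hangle.mp harg
      set r : ℝ := vmax / ‖i‖ with hr_def
      have hrpos : 0 < r := div_pos hvmax habsi
      set vA : ℂ := (r : ℂ) * (Complex.I * i) with hvA_def
      have habsA : ‖vA‖ = vmax := by
        rw [hvA_def, norm_mul, norm_mul, Complex.norm_real, Real.norm_eq_abs, Complex.norm_I, abs_of_pos hrpos,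
          hr_def, one_mul]
        field_simp
      have hmemA : vmin * m ≤ (vA * (starRingEnd ℂ) v0).re := by
        have he : vA * (starRingEnd ℂ) v0 = (r : ℂ) * z := by
          rw [hvA_def, hz_def]; ring
        have hre : (vA * (starRingEnd ℂ) v0).re = r * z.re := by
          rw [he]; simp
        rw [hre]
        have : zn * cφ = ‖i‖ * m * (vmin / vmax) := by
          rw [hznval, hcos]
        have h2 : ‖i‖ * m * (vmin / vmax) ≤ z.re := this ▸ hzrge
        rw [hr_def]
        rw [div_mul_eq_mul_div, le_div_iff₀ habsi]
        calc vmin * m * ‖i‖ = vmax * (‖i‖ * m * (vmin / vmax)) := by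
              field_simp
          _ ≤ vmax * z.re := mul_le_mul_of_nonneg_left h2 hvmax.le
      have hvalA : (vA * (starRingEnd ℂ) i).im = vmax * ‖i‖ := by
        have : (vA * (starRingEnd ℂ) i).im = r * (i.re^2 + i.im^2) := by
          simp [hvA_def, Complex.mul_im, Complex.mul_re]
          ring
        rw [this, hr_def]
        have habs2 : i.re^2 + i.im^2 = ‖i‖^2 := by
          rw [Complex.sq_norm, Complex.normSq_apply]; ring
        rw [habs2]
        field_simp
      have := hL vA ⟨le_of_eq habsA, hmemA⟩
      rw [hvalA] at this
      exact this
    · refine hcorner (θ - φ) ?_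
      have : θ - φ - θ = -φ := by ring
      rw [this, Real.cos_neg]
    · refine hcorner (θ + φ) ?_
      have : θ + φ - θ = φ := by ring
      rw [this]
  · rintro ⟨hA, hB, hC⟩ v ⟨hv1, hv2⟩
    set U : ℝ := (v * (starRingEnd ℂ) v0).re with hU_def
    set W : ℝ := (v * (starRingEnd ℂ) v0).im with hW_def
    have hv2' : vmin * m ≤ U := hv2
    have hUW : U^2 + W^2 ≤ vmax^2 * m^2 := by
      have h1 : U^2 + W^2 = ‖v * (starRingEnd ℂ) v0‖^2 := by
        rw [Complex.sq_norm, Complex.normSq_apply, hU_def, hW_def]; ring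
      rw [h1, norm_mul]
      have h2 : ‖(starRingEnd ℂ) v0‖ = m := by
        rw [hm_def]; simp
      rw [h2, mul_pow]
      have h3 : ‖v‖^2 ≤ vmax^2 := by
        have := norm_nonneg v
        exact pow_le_pow_left₀ this hv1 2
      exact mul_le_mul_of_nonneg_right h3 (sq_nonneg m)
    have hobjv := hobj v
    have hfin : U * z.re + W * z.im ≤ qmax * m^2 → (v * (starRingEnd ℂ) i).im ≤ qmax := by
      intro h
      have h2 : (v * (starRingEnd ℂ) i).im * m^2 ≤ qmax * m^2 := by
        rw [hobjv]; exact h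
      have hm2 : 0 < m^2 := by positivity
      exact le_of_mul_le_mul_right h2 hm2
    apply hfin
    -- condition transfers
    have hCz : vmax * (z.re * cφ + z.im * sφ) ≤ qmax * m := by
      rw [← hcornP]
      exact mul_le_mul_of_nonneg_right hC hm.le
    have hBz : vmax * (z.re * cφ - z.im * sφ) ≤ qmax * m := by
      rw [← hcornM]
      exact mul_le_mul_of_nonneg_right hB hm.le
    rcases le_or_gt (zn * cφ) z.re with hcase | hcase
    · have hAi := hA (hangle.mpr hcase)
      have hcs : U * z.re + W * z.im ≤ (vmax * m) * zn :=
        cauchy_aux U W (vmax*m) z.re z.im zn (by rw [mul_pow]; exact hUW) (by positivity)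
          hznsq hzn0
      calc U * z.re + W * z.im ≤ (vmax * m) * zn := hcs
        _ = (vmax * ‖i‖) * m^2 := by rw [hznval]; ring
        _ ≤ qmax * m^2 := mul_le_mul_of_nonneg_right hAi (sq_nonneg m)
    · rcases eq_or_lt_of_le hsφ0 with hs0 | hs0
      · -- degenerate: sφ = 0, so cφ = 1, vmin = vmax, feasible set is a point
        have hcφ1 : cφ = 1 := by
          have h1 : cφ^2 = 1 := by rw [← hs0] at hpyth; linarith [hpyth]
          have h2 : (cφ - 1) * (cφ + 1) = 0 := by linear_combination h1
          rcases mul_eq_zero.mp h2 with h | h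
          · linarith
          · have : 0 < cφ := by rw [hcos]; exact hr0
            linarith
        have hvv : vmin = vmax := by rw [← hcφm, hcφ1, mul_one]
        have hge1 : vmax * m ≤ U := by rw [← hvv]; exact hv2'
        obtain ⟨hUz, hWz⟩ := deg_aux U W (vmax * m) (by positivity) hge1
          (by rw [mul_pow]; exact hUW)
        rw [hWz, hUz]
        have hfin2 : vmax * z.re ≤ qmax * m := by
          have := hCz
          rw [← hs0, hcφ1] at this
          simpa using this
        calc vmax * m * z.re + 0 * z.im = m * (vmax * z.re) := by ring
          _ ≤ m * (qmax * m) := mul_le_mul_of_nonneg_left hfin2 hm.le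
          _ = qmax * m^2 := by ring
      · rcases le_or_gt 0 z.im with hzi | hzi
        · exact core_aux vmin vmax m qmax sφ cφ U W z.re z.im zn hm hs0 hpyth hcφm hmin hvmax
            hzi hcase.le hznsq hv2' hUW hCz
        · have h := core_aux vmin vmax m qmax sφ cφ U (-W) z.re (-z.im) zn hm hs0 hpyth hcφm
            hmin hvmax (by linarith) hcase.le (by linear_combination hznsq) hv2'
            (by linarith [hUW]) (by linarith [hBz])
          linarith [h]
end

section
/- Let m ≥ 3 be a natural number and r ≥ 0 a real number. If a complex number i satisfies, for every j ∈ {1, 2, …, m}, the linear inequality Re(i)·cos((2j−1)π/m) + Im(i)·sin((2j−1)π/m) ≤ r·cos(π/m), then |i| ≤ r. (The regular m-gon polyhedral inner approximation of the current-magnitude constraint is indeed an inner approximation: every point of the inscribed polygon lies in the disk of radius r.) -/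
/-- The regular `m`-gon polyhedral inner approximation of the
current-magnitude constraint is indeed an inner approximation: every point of the
inscribed polygon lies in the disk of radius `r`. -/
theorem polygon_inner_approx_subset_disk
    (m : ℕ) (hm : 3 ≤ m) (r : ℝ) (hr : 0 ≤ r) (i : ℂ)
    (hpoly : ∀ j ∈ Finset.Icc 1 m,
      i.re * Real.cos ((2 * (j : ℝ) - 1) * Real.pi / m)
        + i.im * Real.sin ((2 * (j : ℝ) - 1) * Real.pi / m)
        ≤ r * Real.cos (Real.pi / m)) :
    ‖i‖ ≤ r := by
  rcases eq_or_ne i 0 with h0 | h0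
  · simpa [h0] using hr
  have hπ := Real.pi_pos
  have hm0 : (0:ℝ) < m := by positivity
  have hm3 : (3:ℝ) ≤ m := by exact_mod_cast hm
  set ρ := ‖i‖ with hρ
  have hρpos : 0 < ρ := norm_pos_iff.mpr h0
  set θ := Complex.arg i with hθdef
  have hre : ρ * Real.cos θ = i.re := Complex.norm_mul_cos_arg i
  have him : ρ * Real.sin θ = i.im := Complex.norm_mul_sin_arg i
  set θ' := if θ < 0 then θ + 2*Real.pi else θ with hθ'def
  have hθ'0 : 0 ≤ θ' := by
    rw [hθ'def]; split
    · have := Complex.neg_pi_lt_arg i; rw [← hθdef] at this; linarith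
    · linarith [not_lt.mp (by assumption)]
  have hθ'lt : θ' < 2*Real.pi := by
    rw [hθ'def]; split
    · linarith [Complex.arg_le_pi i, (by assumption : θ < 0)]
    · linarith [Complex.arg_le_pi i]
  set x := θ' * m / (2*Real.pi) with hxdef
  have hx0 : 0 ≤ x := by positivity
  have hxm : x < m := by
    rw [hxdef, div_lt_iff₀ (by positivity)]
    nlinarith
  set j := max ⌈x⌉₊ 1 with hjdef
  have hj1 : 1 ≤ j := le_max_right _ _
  have hjm : j ≤ m := by
    apply max_le
    · exact Nat.ceil_le.mpr hxm.le
    · omega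
  have hxj : x ≤ (j:ℝ) := le_trans (Nat.le_ceil x) (by exact_mod_cast le_max_left _ _)
  have hjx : (j:ℝ) ≤ x + 1 := by
    rcases Nat.eq_zero_or_pos ⌈x⌉₊ with hc | hc
    · have : j = 1 := by omega
      rw [this]; push_cast; linarith
    · have : j = ⌈x⌉₊ := by omega
      rw [this]; linarith [Nat.ceil_lt_add_one hx0]
  -- bounds on θ' * m
  have hxeq : θ' * m = x * (2*Real.pi) := by
    rw [hxdef]; field_simp
  have hA : θ' * m - (2*(j:ℝ)-1)*Real.pi ≤ Real.pi := by nlinarith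
  have hB : -Real.pi ≤ θ' * m - (2*(j:ℝ)-1)*Real.pi := by nlinarith
  set a := (2*(j:ℝ)-1)*Real.pi/m with hadef
  have hdiff : θ' - a = (θ' * m - (2*(j:ℝ)-1)*Real.pi)/m := by
    rw [hadef]; field_simp
  have habs : |θ' - a| ≤ Real.pi/m := by
    rw [hdiff, abs_div, abs_of_pos hm0]
    gcongr
    exact abs_le.mpr ⟨hB, hA⟩
  have hπm_le : Real.pi/m ≤ Real.pi := by
    apply div_le_self hπ.le
    linarith
  have hcos1 : Real.cos (Real.pi/m) ≤ Real.cos (θ' - a) := by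
    rw [← Real.cos_abs (θ' - a)]
    exact Real.cos_le_cos_of_nonneg_of_le_pi (abs_nonneg _) hπm_le habs
  have hcoseq : Real.cos (θ - a) = Real.cos (θ' - a) := by
    rw [hθ'def]; split
    · rw [show θ + 2*Real.pi - a = θ - a + 2*Real.pi by ring, Real.cos_add_two_pi]
    · rfl
  have hmem : j ∈ Finset.Icc 1 m := Finset.mem_Icc.mpr ⟨hj1, hjm⟩
  have hp := hpoly j hmem
  rw [← hre, ← him] at hp
  have hp2 : ρ * Real.cos (θ - a) ≤ r * Real.cos (Real.pi/m) := by
    rw [Real.cos_sub]; rw [← hadef] at hp; nlinarith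
  have hcospos : 0 < Real.cos (Real.pi/m) := by
    apply Real.cos_pos_of_mem_Ioo
    constructor
    · have : 0 < Real.pi/m := by positivity
      linarith
    · have : Real.pi/m ≤ Real.pi/3 := by
        apply div_le_div_of_nonneg_left hπ.le (by norm_num) hm3
      linarith
  have key : ρ * Real.cos (Real.pi/m) ≤ r * Real.cos (Real.pi/m) := by
    calc ρ * Real.cos (Real.pi/m) ≤ ρ * Real.cos (θ - a) := by
          rw [hcoseq]; exact mul_le_mul_of_nonneg_left hcos1 hρpos.le
      _ ≤ r * Real.cos (Real.pi/m) := hp2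
  exact le_of_mul_le_mul_right key hcospos
end

section
/- Let vmin, vmax be real numbers with 0 < vmin < vmax, let v0 be a nonzero complex number with θ = arg(v0), let φ = arccos(vmin/vmax), and let N ≥ 2 be a natural number. Define the partition angles ψ_k = θ − φ + 2kφ/N for k = 0, 1, …, N. Suppose a complex number v satisfies the lower-bound constraint Re(v · conj(v0)) ≥ vmin · |v0| and, for each k = 0, …, N−1, the chord constraint Re(v · exp(−i·(ψ_k + ψ_{k+1})/2)) ≤ vmax·cos(φ/N). Then vmin ≤ |v| ≤ vmax. (The polyhedral voltage feasibility domain obtained by replacing the outer circle of radius vmax by inscribed chords over a uniform partition of the arc [θ − φ, θ + φ] is an inner approximation of the annulus constraint.) -/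
lemma cos_mul_cos' (a b : ℝ) :
    Real.cos a * Real.cos b = (Real.cos (a - b) + Real.cos (a + b)) / 2 := by
  rw [Real.cos_sub, Real.cos_add]; ring

set_option maxHeartbeats 1000000 in
lemma polyaux (vmin vmax φ : ℝ) (hmin : 0 < vmin) (hvmax : 0 < vmax)
    (hφpos : 0 < φ) (hφlt : φ < Real.pi / 2) (hcos : vmax * Real.cos φ = vmin)
    (N : ℕ) (hN : 2 ≤ N) (r δ : ℝ)
    (hδ : |δ| < Real.pi / 2)
    (hx : vmin ≤ r * Real.cos δ)
    (hC : ∀ k, k < N → r * Real.cos (δ - (-φ + (2 * (k:ℝ) + 1) * φ / N)) ≤ vmax * Real.cos (φ / N)) :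
    r ≤ vmax := by
  have hNR : (2:ℝ) ≤ N := by exact_mod_cast hN
  have hNR0 : (0:ℝ) < N := by linarith
  have hφN0 : 0 < φ / N := by positivity
  have hφNφ : φ / N ≤ φ / 2 := div_le_div_of_nonneg_left hφpos.le (by norm_num) hNR
  have hδ1 : -(Real.pi/2) < δ := by have := abs_lt.mp hδ; linarith [this.1]
  have hδ2 : δ < Real.pi/2 := (abs_lt.mp hδ).2
  have hcosδ : 0 < Real.cos δ := Real.cos_pos_of_mem_Ioo ⟨hδ1, hδ2⟩
  have hr : 0 < r := by nlinarith [Real.cos_le_one δ]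
  have hcosφ : 0 < Real.cos φ := Real.cos_pos_of_mem_Ioo ⟨by linarith [Real.pi_pos], hφlt⟩
  have hcosφN : 0 < Real.cos (φ / N) :=
    Real.cos_pos_of_mem_Ioo ⟨by linarith [Real.pi_pos], by linarith⟩
  have hReal.pi3 : (3:ℝ) ≤ Real.pi := by linarith [Real.pi_gt_three]
  rcases lt_or_ge φ δ with hcase | hcase
  · -- δ > φ : contradiction with k = N - 1
    exfalso
    have h1 := hC (N - 1) (by omega)
    have hcast : ((N - 1 : ℕ) : ℝ) = (N : ℝ) - 1 := by
      have h1N : (1:ℕ) ≤ N := by omega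
      push_cast [h1N]; ring
    rw [hcast] at h1
    have hμ : δ - (-φ + (2 * ((N:ℝ) - 1) + 1) * φ / N) = δ - φ + φ / N := by
      field_simp; ring
    rw [hμ] at h1
    have hγpos : 0 < δ - φ + φ / N := by linarith
    have hγlt : δ - φ + φ / N < Real.pi / 2 := by linarith
    have hcosγ : 0 < Real.cos (δ - φ + φ / N) :=
      Real.cos_pos_of_mem_Ioo ⟨by linarith, hγlt⟩
    have hkey : Real.cos (δ - φ/N) < Real.cos (δ - 2*φ + φ/N) := by
      rw [show Real.cos (δ - 2*φ + φ/N) = Real.cos (|δ - 2*φ + φ/N|) from (Real.cos_abs _).symm]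
      apply Real.cos_lt_cos_of_nonneg_of_le_pi (abs_nonneg _) (by linarith)
      rw [abs_lt]
      constructor
      · linarith
      · have h2 : φ / N < φ := by linarith
        linarith
    have id1 : Real.cos (δ - φ + φ / N) * Real.cos φ
        = (Real.cos (δ - 2*φ + φ/N) + Real.cos (δ + φ/N)) / 2 := by
      rw [cos_mul_cos']
      congr 2 <;> ring_nf
    have id2 : Real.cos δ * Real.cos (φ/N)
        = (Real.cos (δ - φ/N) + Real.cos (δ + φ/N)) / 2 := by
      rw [cos_mul_cos']
    have s1 : vmin * Real.cos (δ - φ + φ / N) ≤ (r * Real.cos δ) * Real.cos (δ - φ + φ / N) :=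
      mul_le_mul_of_nonneg_right hx hcosγ.le
    have s2 : (r * Real.cos (δ - φ + φ / N)) * Real.cos δ
        ≤ (vmax * Real.cos (φ / N)) * Real.cos δ :=
      mul_le_mul_of_nonneg_right h1 hcosδ.le
    have s3 : vmin * Real.cos (δ - φ + φ / N) ≤ vmax * Real.cos (φ / N) * Real.cos δ := by
      linarith [s1, s2]
    have s4 : vmin * Real.cos (δ - φ + φ / N) * Real.cos φ
        ≤ vmax * Real.cos (φ / N) * Real.cos δ * Real.cos φ :=
      mul_le_mul_of_nonneg_right s3 hcosφ.le
    have s5 : vmax * Real.cos (φ / N) * Real.cos δ * Real.cos φ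
        = vmin * (Real.cos δ * Real.cos (φ / N)) := by rw [← hcos]; ring
    have s6 : Real.cos (δ - φ + φ / N) * Real.cos φ ≤ Real.cos δ * Real.cos (φ / N) := by
      have s6' : vmin * (Real.cos (δ - φ + φ / N) * Real.cos φ)
          ≤ vmin * (Real.cos δ * Real.cos (φ / N)) := by linarith [s4, s5]
      exact le_of_mul_le_mul_left s6' hmin
    rw [id1, id2] at s6
    linarith
  rcases lt_or_ge δ (-φ) with hcase2 | hcase2
  · -- δ < -φ : contradiction with k = 0
    exfalso
    have h1 := hC 0 (by omega)
    have hμ : δ - (-φ + (2 * ((0:ℕ):ℝ) + 1) * φ / N) = δ + φ - φ / N := by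
      push_cast; ring
    rw [hμ] at h1
    have hγneg : δ + φ - φ / N < 0 := by linarith
    have hγgt : -(Real.pi/2) < δ + φ - φ / N := by linarith
    have hcosγ : 0 < Real.cos (δ + φ - φ / N) :=
      Real.cos_pos_of_mem_Ioo ⟨hγgt, by linarith⟩
    have hkey : Real.cos (δ + φ/N) < Real.cos (δ + 2*φ - φ/N) := by
      rw [show Real.cos (δ + 2*φ - φ/N) = Real.cos (|δ + 2*φ - φ/N|) from (Real.cos_abs _).symm,
          show Real.cos (δ + φ/N) = Real.cos (-(δ + φ/N)) from (Real.cos_neg _).symm]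
      apply Real.cos_lt_cos_of_nonneg_of_le_pi (abs_nonneg _) (by linarith)
      rw [abs_lt]
      constructor
      · linarith
      · have h2 : φ / N < φ := by linarith
        linarith
    have id1 : Real.cos (δ + φ - φ / N) * Real.cos φ
        = (Real.cos (δ - φ/N) + Real.cos (δ + 2*φ - φ/N)) / 2 := by
      rw [cos_mul_cos']
      congr 2 <;> ring_nf
    have id2 : Real.cos δ * Real.cos (φ/N)
        = (Real.cos (δ - φ/N) + Real.cos (δ + φ/N)) / 2 := by
      rw [cos_mul_cos']
    have s1 : vmin * Real.cos (δ + φ - φ / N) ≤ (r * Real.cos δ) * Real.cos (δ + φ - φ / N) :=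
      mul_le_mul_of_nonneg_right hx hcosγ.le
    have s2 : (r * Real.cos (δ + φ - φ / N)) * Real.cos δ
        ≤ (vmax * Real.cos (φ / N)) * Real.cos δ :=
      mul_le_mul_of_nonneg_right h1 hcosδ.le
    have s3 : vmin * Real.cos (δ + φ - φ / N) ≤ vmax * Real.cos (φ / N) * Real.cos δ := by
      linarith [s1, s2]
    have s4 : vmin * Real.cos (δ + φ - φ / N) * Real.cos φ
        ≤ vmax * Real.cos (φ / N) * Real.cos δ * Real.cos φ :=
      mul_le_mul_of_nonneg_right s3 hcosφ.le
    have s5 : vmax * Real.cos (φ / N) * Real.cos δ * Real.cos φ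
        = vmin * (Real.cos δ * Real.cos (φ / N)) := by rw [← hcos]; ring
    have s6 : Real.cos (δ + φ - φ / N) * Real.cos φ ≤ Real.cos δ * Real.cos (φ / N) := by
      have s6' : vmin * (Real.cos (δ + φ - φ / N) * Real.cos φ)
          ≤ vmin * (Real.cos δ * Real.cos (φ / N)) := by linarith [s4, s5]
      exact le_of_mul_le_mul_left s6' hmin
    rw [id1, id2] at s6
    linarith
  · -- |δ| ≤ φ : choose the nearest chord
    obtain ⟨t, ht⟩ : ∃ t : ℝ, t = (δ + φ) * N / (2 * φ) := ⟨_, rfl⟩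
    have ht0 : 0 ≤ t := by
      rw [ht]
      apply div_nonneg _ (by linarith)
      exact mul_nonneg (by linarith) hNR0.le
    have htN : t ≤ N := by
      rw [ht, div_le_iff₀ (by linarith)]
      have := mul_le_mul_of_nonneg_right (show δ + φ ≤ 2 * φ by linarith) hNR0.le
      linarith
    obtain ⟨k, hk⟩ : ∃ k : ℕ, k = min (⌊t⌋.toNat) (N - 1) := ⟨_, rfl⟩
    have hkN : k < N := by omega
    have hkm' := hk
    have hkt : (k : ℝ) ≤ t ∧ t ≤ (k : ℝ) + 1 := by
      rcases le_or_gt (⌊t⌋.toNat) (N - 1) with hm | hm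
      · have hkm : k = ⌊t⌋.toNat := by omega
        have h0 : (0:ℤ) ≤ ⌊t⌋ := Int.floor_nonneg.mpr ht0
        have hcast : ((⌊t⌋.toNat : ℕ) : ℝ) = (⌊t⌋ : ℝ) := by
          exact_mod_cast congrArg (Int.cast : ℤ → ℝ) (Int.toNat_of_nonneg h0)
        constructor
        · rw [hkm, hcast]; exact Int.floor_le t
        · rw [hkm, hcast]; linarith [Int.lt_floor_add_one t]
      · have hkm : k = N - 1 := by omega
        have : (N : ℤ) ≤ ⌊t⌋ := by omega
        have hNt : (N : ℝ) ≤ t := le_trans (by exact_mod_cast this) (Int.floor_le t)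
        have htN' : t = N := le_antisymm htN hNt
        have hcast : ((k:ℕ):ℝ) = (N:ℝ) - 1 := by
          rw [hkm]
          have h1N : (1:ℕ) ≤ N := by omega
          push_cast [h1N]; ring
        constructor
        · rw [hcast, htN']; linarith
        · rw [hcast, htN']; linarith
    have hδt : δ = 2 * φ * t / N - φ := by
      rw [ht]; field_simp; ring
    have h1 := hC k hkN
    have habs : |δ - (-φ + (2 * (k:ℝ) + 1) * φ / N)| ≤ φ / N := by
      have he : δ - (-φ + (2 * (k:ℝ) + 1) * φ / N) = (2*t - 2*(k:ℝ) - 1) * (φ / N) := by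
        rw [hδt]; field_simp; ring
      rw [he, abs_mul, abs_of_pos hφN0]
      have : |2*t - 2*(k:ℝ) - 1| ≤ 1 := by
        rw [abs_le]; constructor <;> [linarith [hkt.1]; linarith [hkt.2]]
      have := mul_le_mul_of_nonneg_right this hφN0.le
      linarith
    have hcosk : Real.cos (φ / N) ≤ Real.cos (δ - (-φ + (2 * (k:ℝ) + 1) * φ / N)) := by
      rw [show Real.cos (δ - (-φ + (2 * (k:ℝ) + 1) * φ / N))
          = Real.cos (|δ - (-φ + (2 * (k:ℝ) + 1) * φ / N)|) from (Real.cos_abs _).symm]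
      exact Real.cos_le_cos_of_nonneg_of_le_pi (abs_nonneg _) (by linarith) habs
    have : r * Real.cos (φ / N) ≤ vmax * Real.cos (φ / N) := by
      calc r * Real.cos (φ / N) ≤ r * Real.cos (δ - (-φ + (2 * (k:ℝ) + 1) * φ / N)) :=
            mul_le_mul_of_nonneg_left hcosk hr.le
        _ ≤ vmax * Real.cos (φ / N) := h1
    exact le_of_mul_le_mul_right this hcosφN


/-- The polyhedral voltage feasibility domain obtained by replacing the
outer circle of radius `vmax` by inscribed chords over a uniform partition of the arc
`[θ - φ, θ + φ]` is an inner approximation of the annulus constraint. -/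
theorem polyhedral_voltage_domain_inner_approx
    (vmin vmax : ℝ) (hmin : 0 < vmin) (hlt : vmin < vmax)
    (v0 : ℂ) (hv0 : v0 ≠ 0)
    (θ φ : ℝ) (hθ : θ = Complex.arg v0) (hφ : φ = Real.arccos (vmin / vmax))
    (N : ℕ) (hN : 2 ≤ N)
    (ψ : ℕ → ℝ) (hψ : ∀ k, ψ k = θ - φ + 2 * (k : ℝ) * φ / N)
    (v : ℂ)
    (hlb : vmin * ‖v0‖ ≤ (v * (starRingEnd ℂ) v0).re)
    (hchords : ∀ k < N,
      (v * Complex.exp (-(((ψ k + ψ (k + 1)) / 2 : ℝ)) * Complex.I)).re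
        ≤ vmax * Real.cos (φ / N)) :
    vmin ≤ ‖v‖ ∧ ‖v‖ ≤ vmax := by
  have hvmax : 0 < vmax := hmin.trans hlt
  have hNR0 : (0:ℝ) < N := by
    have : (2:ℝ) ≤ N := by exact_mod_cast hN
    linarith
  have hφcosdiv : Real.cos φ = vmin / vmax := by
    rw [hφ]
    have h01 : 0 < vmin / vmax := div_pos hmin hvmax
    exact Real.cos_arccos (by linarith) (by rw [div_le_one hvmax]; linarith)
  have hcos : vmax * Real.cos φ = vmin := by
    rw [hφcosdiv]; field_simp
  have hφpos : 0 < φ := by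
    rw [hφ]; exact Real.arccos_pos.2 ((div_lt_one hvmax).2 hlt)
  have hφlt : φ < Real.pi / 2 := by
    rw [hφ]; exact Real.arccos_lt_pi_div_two.2 (div_pos hmin hvmax)
  obtain ⟨w, hw⟩ : ∃ w : ℂ, w = v * Complex.exp (-(θ:ℂ) * Complex.I) := ⟨_, rfl⟩
  have habsw : ‖w‖ = ‖v‖ := by
    rw [hw, norm_mul, Complex.norm_exp]; simp
  have hconj : (starRingEnd ℂ) v0 = (‖v0‖ : ℂ) * Complex.exp (-(θ:ℂ) * Complex.I) := by
    conv_lhs => rw [← Complex.norm_mul_exp_arg_mul_I v0]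
    rw [map_mul, ← Complex.exp_conj, ← hθ, Complex.conj_ofReal]
    congr 1
    simp [Complex.conj_I]
  have habs0 : 0 < ‖v0‖ := by
    exact norm_pos_iff.mpr hv0
  have hwre : vmin ≤ w.re := by
    have h1 : (v * (starRingEnd ℂ) v0).re = ‖v0‖ * w.re := by
      rw [hconj, hw, show v * ((‖v0‖ : ℂ) * Complex.exp (-(θ:ℂ) * Complex.I))
          = (‖v0‖ : ℂ) * (v * Complex.exp (-(θ:ℂ) * Complex.I)) from by ring,
        Complex.re_ofReal_mul]
    rw [h1] at hlb
    have := (mul_le_mul_iff_of_pos_left habs0).mp (by linarith [hlb] : ‖v0‖ * vmin ≤ ‖v0‖ * w.re)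
    linarith
  have hlow : vmin ≤ ‖v‖ := by
    calc vmin ≤ w.re := hwre
      _ ≤ ‖w‖ := Complex.re_le_norm w
      _ = ‖v‖ := habsw
  refine ⟨hlow, ?_⟩
  obtain ⟨δ, hδdef⟩ : ∃ δ : ℝ, δ = Complex.arg w := ⟨_, rfl⟩
  have hδ : |δ| < Real.pi / 2 := by
    rw [hδdef]
    exact Complex.abs_arg_lt_pi_div_two_iff.2 (Or.inl (by linarith))
  have hwpolar : w = (‖v‖ : ℂ) * Complex.exp ((δ:ℂ) * Complex.I) := by
    conv_lhs => rw [← Complex.norm_mul_exp_arg_mul_I w]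
    rw [habsw, hδdef]
  have hx : vmin ≤ ‖v‖ * Real.cos δ := by
    have : w.re = ‖v‖ * Real.cos δ := by
      rw [hwpolar, Complex.re_ofReal_mul, Complex.exp_ofReal_mul_I_re]
    linarith [hwre, this.symm.le]
  have hv' : v = w * Complex.exp ((θ:ℂ) * Complex.I) := by
    rw [hw, mul_assoc, ← Complex.exp_add]; simp
  have hC : ∀ k, k < N →
      ‖v‖ * Real.cos (δ - (-φ + (2 * (k:ℝ) + 1) * φ / N)) ≤ vmax * Real.cos (φ / N) := by
    intro k hk
    have h := hchords k hk
    have hc : (ψ k + ψ (k + 1)) / 2 = θ + (-φ + (2 * (k:ℝ) + 1) * φ / N) := by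
      rw [hψ k, hψ (k + 1)]
      push_cast
      field_simp
      ring
    have he : v * Complex.exp (-(((ψ k + ψ (k + 1)) / 2 : ℝ)) * Complex.I)
        = (‖v‖ : ℂ) *
          Complex.exp (((δ - (-φ + (2 * (k:ℝ) + 1) * φ / N) : ℝ) : ℂ) * Complex.I) := by
      conv_lhs => rw [hv', hwpolar, hc, mul_assoc, mul_assoc, ← Complex.exp_add, ← Complex.exp_add]
      refine congrArg (fun z => ((‖v‖ : ℝ) : ℂ) * Complex.exp z) ?_
      push_cast
      ring
    rw [he, Complex.re_ofReal_mul, Complex.exp_ofReal_mul_I_re] at h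
    exact h
  exact polyaux vmin vmax φ hmin hvmax hφpos hφlt hcos N hN (‖v‖) δ hδ hx hC
end

section
/- Let vmin, vmax be real numbers with 0 < vmin ≤ vmax, let v0 be a nonzero complex number with θ = arg(v0), let φ = arccos(vmin/vmax), and let pmax be real. For any complex number i, the robust active-power constraint holds over the full voltage feasibility domain if and only if it holds on the outer arc: (∀ v ∈ S_V, Re(v · conj(i)) ≤ pmax) if and only if (∀ ψ ∈ [θ − φ, θ + φ], vmax·(Re(i)·cos(ψ) + Im(i)·sin(ψ)) ≤ pmax). (Since the constraint is linear in v, it suffices to enforce it at the extreme points of S_V, which lie on the arc of radius vmax.) -/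
set_option maxHeartbeats 1000000


/-- Since the active-power constraint is linear in `v`, enforcing it
over the whole voltage feasibility domain is equivalent to enforcing it on the outer
arc of radius `vmax` with angles in `[θ - φ, θ + φ]`. -/
theorem robust_constraint_iff_on_arc
    (vmin vmax : ℝ) (hmin : 0 < vmin) (hle : vmin ≤ vmax)
    (v0 : ℂ) (hv0 : v0 ≠ 0)
    (θ φ : ℝ) (hθ : θ = Complex.arg v0) (hφ : φ = Real.arccos (vmin / vmax))
    (pmax : ℝ) (i : ℂ) :
    (∀ v ∈ {v : ℂ | ‖v‖ ≤ vmax ∧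
        vmin * ‖v0‖ ≤ (v * (starRingEnd ℂ) v0).re},
      (v * (starRingEnd ℂ) i).re ≤ pmax)
    ↔ (∀ ψ ∈ Set.Icc (θ - φ) (θ + φ),
        vmax * (i.re * Real.cos ψ + i.im * Real.sin ψ) ≤ pmax) := by
  have hvmax : (0:ℝ) < vmax := lt_of_lt_of_le hmin hle
  have hc : (0:ℝ) < ‖v0‖ := by
    simpa [norm_pos_iff] using hv0
  set c : ℝ := ‖v0‖ with hcdef
  have hcosθ : Real.cos θ = v0.re / c := by
    rw [hθ]; exact Complex.cos_arg hv0
  have hsinθ : Real.sin θ = v0.im / c := by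
    rw [hθ]; exact Complex.sin_arg v0
  have hv0re : v0.re = c * Real.cos θ := by
    rw [hcosθ]; field_simp
  have hv0im : v0.im = c * Real.sin θ := by
    rw [hsinθ]; field_simp
  have hpyθ : Real.sin θ ^ 2 + Real.cos θ ^ 2 = 1 := Real.sin_sq_add_cos_sq θ
  have hratio1' : (-1:ℝ) ≤ vmin / vmax := by
    have : (0:ℝ) ≤ vmin / vmax := by positivity
    linarith
  have hratio2 : vmin / vmax ≤ 1 := by
    rw [div_le_one hvmax]; exact hle
  have hφpos : 0 ≤ φ := hφ ▸ Real.arccos_nonneg _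
  have hφpi : φ ≤ Real.pi := hφ ▸ Real.arccos_le_pi _
  have hcosφ : Real.cos φ = vmin / vmax := hφ ▸ Real.cos_arccos hratio1' hratio2
  constructor
  · intro h ψ hψ
    set v : ℂ := ⟨vmax * Real.cos ψ, vmax * Real.sin ψ⟩ with hvdef
    have hpyψ : Real.sin ψ ^ 2 + Real.cos ψ ^ 2 = 1 := Real.sin_sq_add_cos_sq ψ
    have habs : ‖v‖ = vmax := by
      rw [Complex.norm_def, Complex.normSq_apply]
      simp only [hvdef]
      rw [show vmax * Real.cos ψ * (vmax * Real.cos ψ) +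
          vmax * Real.sin ψ * (vmax * Real.sin ψ) = vmax ^ 2 by
        linear_combination (vmax ^ 2) * hpyψ]
      exact Real.sqrt_sq hvmax.le
    have hcosdiff : vmin / vmax ≤ Real.cos (ψ - θ) := by
      rw [← hcosφ, ← Real.cos_abs (ψ - θ)]
      apply Real.cos_le_cos_of_nonneg_of_le_pi (abs_nonneg _) hφpi
      rw [abs_le]
      constructor <;> [linarith [hψ.1]; linarith [hψ.2]]
    have hmem : v ∈ {v : ℂ | ‖v‖ ≤ vmax ∧
        vmin * ‖v0‖ ≤ (v * (starRingEnd ℂ) v0).re} := by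
      refine ⟨habs.le, ?_⟩
      have : (v * (starRingEnd ℂ) v0).re = v.re * v0.re + v.im * v0.im := by
        simp [Complex.mul_re]
      rw [this, hv0re, hv0im]
      simp only [hvdef]
      have key : vmax * (vmin / vmax) = vmin := by field_simp
      have h2 : vmin ≤ vmax * Real.cos (ψ - θ) := by
        have := mul_le_mul_of_nonneg_left hcosdiff hvmax.le
        rwa [key] at this
      rw [Real.cos_sub] at h2
      nlinarith [mul_le_mul_of_nonneg_left h2 hc.le]
    have := h v hmem
    have hre : (v * (starRingEnd ℂ) i).re =
        vmax * (i.re * Real.cos ψ + i.im * Real.sin ψ) := by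
      simp [Complex.mul_re, hvdef]; ring
    linarith [hre ▸ this]
  · intro h v hv
    obtain ⟨hvabs, hvlin⟩ := hv
    obtain ⟨a, ha⟩ : ∃ a : ℝ, a = v.re * Real.cos θ + v.im * Real.sin θ := ⟨_, rfl⟩
    obtain ⟨b, hb⟩ : ∃ b : ℝ, b = v.im * Real.cos θ - v.re * Real.sin θ := ⟨_, rfl⟩
    have hvre : v.re = a * Real.cos θ - b * Real.sin θ := by
      simp only [ha, hb]; linear_combination (-v.re) * hpyθ
    have hvim : v.im = a * Real.sin θ + b * Real.cos θ := by
      simp only [ha, hb]; linear_combination (-v.im) * hpyθ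
    have hlinre : (v * (starRingEnd ℂ) v0).re = c * a := by
      simp [Complex.mul_re, hv0re, hv0im, ha]; ring
    have hamin : vmin ≤ a := by
      rw [hlinre] at hvlin
      have := (mul_le_mul_iff_right₀ hc).mp (by linarith [hvlin] : c * vmin ≤ c * a)
      linarith
    have hapos : 0 < a := lt_of_lt_of_le hmin hamin
    have hsq : v.re ^ 2 + v.im ^ 2 ≤ vmax ^ 2 := by
      have h1 : ‖v‖ ^ 2 ≤ vmax ^ 2 := by
        apply pow_le_pow_left₀ (norm_nonneg v) hvabs
      rw [Complex.sq_norm, Complex.normSq_apply] at h1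
      nlinarith
    have hab : a ^ 2 + b ^ 2 ≤ vmax ^ 2 := by
      have heq : a ^ 2 + b ^ 2 = v.re ^ 2 + v.im ^ 2 := by
        simp only [ha, hb]; linear_combination (v.re ^ 2 + v.im ^ 2) * hpyθ
      linarith [heq ▸ hsq]
    have havmax : a ≤ vmax := by nlinarith [sq_nonneg b, sq_nonneg (a - vmax), sq_nonneg (a + vmax)]
    obtain ⟨s, hs⟩ : ∃ s : ℝ, s = Real.sqrt (vmax ^ 2 - a ^ 2) := ⟨_, rfl⟩
    have hsnn : 0 ≤ s := hs ▸ Real.sqrt_nonneg _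
    have hssq : s ^ 2 = vmax ^ 2 - a ^ 2 := by
      rw [hs]; exact Real.sq_sqrt (by nlinarith)
    have hbs : |b| ≤ s := by
      rw [abs_le]
      constructor
      · nlinarith [sq_nonneg (s + b), sq_nonneg (s - b)]
      · nlinarith [sq_nonneg (s - b), sq_nonneg (s + b)]
    obtain ⟨δ, hδ⟩ : ∃ d : ℝ, d = Real.arccos (a / vmax) := ⟨_, rfl⟩
    have hr1 : (-1:ℝ) ≤ a / vmax := by
      have : (0:ℝ) ≤ a / vmax := by positivity
      linarith
    have hr2 : a / vmax ≤ 1 := by rw [div_le_one hvmax]; exact havmax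
    have hcosδ : Real.cos δ = a / vmax := by rw [hδ]; exact Real.cos_arccos hr1 hr2
    have hvcosδ : vmax * Real.cos δ = a := by rw [hcosδ]; field_simp
    have hvsinδ : vmax * Real.sin δ = s := by
      rw [hδ, Real.sin_arccos]
      rw [show vmax * Real.sqrt (1 - (a / vmax) ^ 2)
          = Real.sqrt (vmax ^ 2) * Real.sqrt (1 - (a / vmax) ^ 2) by
        rw [Real.sqrt_sq hvmax.le]]
      rw [← Real.sqrt_mul (by positivity)]
      rw [hs]
      congr 1
      field_simp
    have hδnn : 0 ≤ δ := hδ ▸ Real.arccos_nonneg _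
    have hδφ : δ ≤ φ := by
      rw [hδ, hφ, Real.arccos, Real.arccos]
      have : vmin / vmax ≤ a / vmax := by gcongr
      linarith [Real.monotone_arcsin this]
    have h1 := h (θ + δ) ⟨by linarith, by linarith⟩
    have h2 := h (θ - δ) ⟨by linarith, by linarith⟩
    rw [Real.cos_add, Real.sin_add] at h1
    rw [Real.cos_sub, Real.sin_sub] at h2
    have e1 : vmax * (i.re * (Real.cos θ * Real.cos δ - Real.sin θ * Real.sin δ)
        + i.im * (Real.sin θ * Real.cos δ + Real.cos θ * Real.sin δ))
        = i.re * (a * Real.cos θ - s * Real.sin θ)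
          + i.im * (a * Real.sin θ + s * Real.cos θ) := by
      rw [← hvcosδ, ← hvsinδ]; ring
    have e2 : vmax * (i.re * (Real.cos θ * Real.cos δ + Real.sin θ * Real.sin δ)
        + i.im * (Real.sin θ * Real.cos δ - Real.cos θ * Real.sin δ))
        = i.re * (a * Real.cos θ + s * Real.sin θ)
          + i.im * (a * Real.sin θ - s * Real.cos θ) := by
      rw [← hvcosδ, ← hvsinδ]; ring
    rw [e1] at h1
    rw [e2] at h2
    have hgoal : (v * (starRingEnd ℂ) i).re =
        i.re * (a * Real.cos θ - b * Real.sin θ)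
          + i.im * (a * Real.sin θ + b * Real.cos θ) := by
      simp [Complex.mul_re, hvre, hvim]; ring
    rw [hgoal]
    rcases le_or_gt 0 (i.im * Real.cos θ - i.re * Real.sin θ) with hB | hB
    · have hbb : b ≤ s := (abs_le.mp hbs).2
      linarith [h1, mul_nonneg (sub_nonneg.2 hbb) hB]
    · have hbb : -s ≤ b := (abs_le.mp hbs).1
      have hBn : 0 ≤ i.re * Real.sin θ - i.im * Real.cos θ := by linarith
      linarith [h2, mul_nonneg (by linarith : (0:ℝ) ≤ b + s) hBn]
end
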